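/- For any integer r ≥ 2 and any positive integer m there exists a neural network Mult^r_m with the absolute value activation a(x) = |x|, of depth L = (2m + 5)⌈log₂ r⌉ + 1, input dimension p_0 = r + 1, output dimension p_{L+1} = 1 and maximal width ‖p‖_∞ ≤ 6r(m + 2) + 1, such that |Mult^r_m(1, x_1, …, x_r) − ∏_{i=1}^{r} x_i| ≤ r² · 4^{−m} for all (x_1, …, x_r) ∈ [0,1]^r, and such that the (r+1)-dimensional row vector J obtained as the product of the entrywise absolute values of its weight matrices satisfies ‖J‖_∞ ≤ 144 r⁴. -/

import Mathlib

open scoped BigOperators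
open Matrix

noncomputable section

/-- A bias-free neural network with width function `p`: for each `i`,
a real weight matrix of size `p (i+1) × p i`. -/
structure NN (p : ℕ → ℕ) where
  W : ∀ i : ℕ, Matrix (Fin (p (i + 1))) (Fin (p i)) ℝ

namespace NN

variable {p : ℕ → ℕ}

/-- Forward pass: output after multiplying by `W i` (activation `α` applied
between consecutive matrices, but not after the last one). -/
def pre (α : ℝ → ℝ) (f : NN p) : (i : ℕ) → (Fin (p 0) → ℝ) → (Fin (p (i + 1)) → ℝ)
  | 0, x => f.W 0 *ᵥ x
  | (i + 1), x => f.W (i + 1) *ᵥ fun j => α (f.pre α i x j)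

/-- Evaluation of the network of depth `L` (i.e. using matrices `W 0, …, W L`). -/
def eval (α : ℝ → ℝ) (f : NN p) (L : ℕ) (x : Fin (p 0) → ℝ) : Fin (p (L + 1)) → ℝ :=
  f.pre α L x

/-- The product `|W i| ⬝ |W (i-1)| ⬝ ⋯ ⬝ |W 0|` of the entrywise absolute values of the
weight matrices. -/
def absProd (f : NN p) : (i : ℕ) → Matrix (Fin (p (i + 1))) (Fin (p 0)) ℝ
  | 0 => Matrix.of fun j k => |f.W 0 j k|
  | (i + 1) => (Matrix.of fun j k => |f.W (i + 1) j k|) * f.absProd i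

/-- `‖f‖_×`: the ℓ¹ norm (sum of absolute values of all entries) of the matrix
`|W L| ⬝ ⋯ ⬝ |W 0|`. -/
def normTimes (f : NN p) (L : ℕ) : ℝ :=
  ∑ j, ∑ k, |f.absProd L j k|

end NN

/-- The absolute value activation function. -/
def absAct : ℝ → ℝ := fun x => |x|


noncomputable section
namespace Mult5

/-- tent map -/
def tent (x : ℝ) : ℝ := 1 - |2 * x - 1|

def gf : ℕ → ℝ → ℝ
  | 0, x => x
  | k + 1, x => tent (gf k x)

def Sf (x : ℝ) : ℕ → ℝ
  | 0 => 0
  | k + 1 => Sf x k + ((4:ℝ) ^ (k+1))⁻¹ * gf (k+1) x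

def sq (m : ℕ) (x : ℝ) : ℝ := x - Sf x m

def mulA (m : ℕ) (a b : ℝ) : ℝ := |sq m ((a + b) / 2) - sq m (|a - b| / 2)|

lemma tent_mem {x : ℝ} (h : x ∈ Set.Icc (0:ℝ) 1) : tent x ∈ Set.Icc (0:ℝ) 1 := by
  obtain ⟨h0, h1⟩ := h
  constructor <;> [skip; skip] <;>
  · rcases le_total (2*x-1) 0 with h' | h'
    · rw [tent, abs_of_nonpos h']; linarith
    · rw [tent, abs_of_nonneg h']; linarith

lemma gf_mem (k : ℕ) {x : ℝ} (h : x ∈ Set.Icc (0:ℝ) 1) : gf k x ∈ Set.Icc (0:ℝ) 1 := by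
  induction k with
  | zero => exact h
  | succ k ih => exact tent_mem ih

lemma tent_identity {x : ℝ} (h : x ∈ Set.Icc (0:ℝ) 1) :
    x - x^2 = tent x / 4 + (tent x - (tent x)^2) / 4 := by
  obtain ⟨h0, h1⟩ := h
  rcases le_total (2*x-1) 0 with h' | h'
  · rw [tent, abs_of_nonpos h']; ring
  · rw [tent, abs_of_nonneg h']; ring

lemma sq_sub (m : ℕ) {x : ℝ} (h : x ∈ Set.Icc (0:ℝ) 1) :
    x - x^2 - Sf x m = (gf m x - (gf m x)^2) / 4^m := by
  induction m with
  | zero => simp [Sf, gf]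
  | succ m ih =>
      have hg := gf_mem m h
      have hid := tent_identity hg
      rw [Sf, show gf (m+1) x = tent (gf m x) from rfl]
      have h4 : ((4:ℝ)^(m+1))⁻¹ = (4^m)⁻¹ * 4⁻¹ := by
        rw [pow_succ, mul_inv]
      rw [h4]
      have h4m : (4:ℝ)^m ≠ 0 := by positivity
      linear_combination ih + hid / 4^m

lemma Sf_nonneg (m : ℕ) {x : ℝ} (h : x ∈ Set.Icc (0:ℝ) 1) : 0 ≤ Sf x m := by
  induction m with
  | zero => simp [Sf]
  | succ m ih =>
      have hg := gf_mem (m+1) h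
      have : (0:ℝ) ≤ ((4:ℝ)^(m+1))⁻¹ * gf (m+1) x := by
        have : (0:ℝ) ≤ gf (m+1) x := hg.1
        positivity
      rw [Sf]; linarith

lemma sq_le_self (m : ℕ) {x : ℝ} (h : x ∈ Set.Icc (0:ℝ) 1) : sq m x ≤ x := by
  have := Sf_nonneg m h
  rw [sq]; linarith

lemma sq_ge_sq (m : ℕ) {x : ℝ} (h : x ∈ Set.Icc (0:ℝ) 1) : x^2 ≤ sq m x := by
  have hs := sq_sub m h
  have hg := gf_mem m h
  have h4 : (0:ℝ) < 4^m := by positivity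
  have : 0 ≤ (gf m x - (gf m x)^2) / 4^m := by
    apply div_nonneg _ (le_of_lt h4)
    nlinarith [hg.1, hg.2]
  rw [sq]; nlinarith [hs]

lemma sq_close (m : ℕ) {x : ℝ} (h : x ∈ Set.Icc (0:ℝ) 1) :
    |sq m x - x^2| ≤ ((4:ℝ)^m)⁻¹ / 4 := by
  have hs := sq_sub m h
  have hg := gf_mem m h
  have h4 : (0:ℝ) < 4^m := by positivity
  have hup : (gf m x - (gf m x)^2) ≤ 1/4 := by nlinarith [sq_nonneg (gf m x - 1/2)]
  have hlo : 0 ≤ (gf m x - (gf m x)^2) := by nlinarith [hg.1, hg.2]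
  have : sq m x - x^2 = (gf m x - (gf m x)^2) / 4^m := by rw [sq]; linarith [hs]
  rw [this, abs_of_nonneg (div_nonneg hlo (le_of_lt h4))]
  rw [div_le_iff₀ h4, div_mul_eq_mul_div, le_div_iff₀ (by norm_num : (0:ℝ) < 4)]
  calc (gf m x - (gf m x)^2) * 4 ≤ 1/4 * 4 := by nlinarith
    _ = ((4:ℝ)^m)⁻¹ * 4^m := by field_simp
    _ ≤ _ := by ring_nf; rfl

-- membership facts for u, v
lemma uv_mem {a b : ℝ} (ha : a ∈ Set.Icc (0:ℝ) 1) (hb : b ∈ Set.Icc (0:ℝ) 1) :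
    (a+b)/2 ∈ Set.Icc (0:ℝ) 1 ∧ |a-b|/2 ∈ Set.Icc (0:ℝ) 1 := by
  obtain ⟨a0, a1⟩ := ha; obtain ⟨b0, b1⟩ := hb
  constructor
  · constructor <;> [linarith; linarith]
  · constructor
    · positivity
    · rcases abs_cases (a - b) with ⟨h, _⟩ | ⟨h, _⟩ <;> rw [h] <;> linarith

lemma z_bound {m : ℕ} {a b : ℝ} (ha : a ∈ Set.Icc (0:ℝ) 1) (hb : b ∈ Set.Icc (0:ℝ) 1) :
    |sq m ((a+b)/2) - sq m (|a-b|/2)| ≤ 1 := by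
  obtain ⟨hu, hv⟩ := uv_mem ha hb
  have h1 := sq_le_self m hu
  have h2 := sq_le_self m hv
  have h3 := sq_ge_sq m hu
  have h4 := sq_ge_sq m hv
  rw [abs_le]
  constructor <;> nlinarith [hu.1, hu.2, hv.1, hv.2, sq_nonneg ((a+b)/2), sq_nonneg (|a-b|/2)]

lemma mulA_mem (m : ℕ) {a b : ℝ} (ha : a ∈ Set.Icc (0:ℝ) 1) (hb : b ∈ Set.Icc (0:ℝ) 1) :
    mulA m a b ∈ Set.Icc (0:ℝ) 1 := by
  refine ⟨abs_nonneg _, ?_⟩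
  exact z_bound ha hb

lemma sq_diff_close (m : ℕ) {a b : ℝ} (ha : a ∈ Set.Icc (0:ℝ) 1) (hb : b ∈ Set.Icc (0:ℝ) 1) :
    |sq m ((a+b)/2) - sq m (|a-b|/2) - a * b| ≤ ((4:ℝ)^m)⁻¹ / 2 := by
  obtain ⟨hu, hv⟩ := uv_mem ha hb
  have h1 := sq_close m hu
  have h2 := sq_close m hv
  have key : ((a+b)/2)^2 - (|a-b|/2)^2 = a * b := by
    have : (|a-b|)^2 = (a-b)^2 := sq_abs _
    field_simp
    nlinarith [this]
  have : sq m ((a+b)/2) - sq m (|a-b|/2) - a*b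
      = (sq m ((a+b)/2) - ((a+b)/2)^2) - (sq m (|a-b|/2) - (|a-b|/2)^2) := by
    rw [← key]; ring
  rw [this]
  calc |_ - _| ≤ |sq m ((a+b)/2) - ((a+b)/2)^2| + |sq m (|a-b|/2) - (|a-b|/2)^2| :=
        abs_sub _ _
    _ ≤ ((4:ℝ)^m)⁻¹/4 + ((4:ℝ)^m)⁻¹/4 := add_le_add h1 h2
    _ = ((4:ℝ)^m)⁻¹/2 := by ring

lemma mulA_close (m : ℕ) {a b : ℝ} (ha : a ∈ Set.Icc (0:ℝ) 1) (hb : b ∈ Set.Icc (0:ℝ) 1) :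
    |mulA m a b - a * b| ≤ ((4:ℝ)^m)⁻¹ / 2 := by
  have h := sq_diff_close m ha hb
  have hab : a * b = |a * b| := by
    rw [abs_of_nonneg (mul_nonneg ha.1 hb.1)]
  have key := abs_abs_sub_abs_le_abs_sub (sq m ((a+b)/2) - sq m (|a-b|/2)) (a*b)
  rw [mulA]
  rw [hab]
  rw [hab] at h
  exact le_trans key (le_trans (le_of_eq (by rw [← hab])) h)


/-! ## Network construction -/

def qr (r : ℕ) : ℕ := Nat.clog 2 r
def Qr (r : ℕ) : ℕ := 2 ^ qr r
def NWd (r : ℕ) : ℕ := 4 * Qr r + 1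
def LLd (r m : ℕ) : ℕ := (2*m+5) * qr r + 1
def pd (r m : ℕ) : ℕ → ℕ := fun i => if i = 0 then r + 1 else if i ≤ LLd r m then NWd r else 1
def pbs (r : ℕ) (k b : ℕ) : ℕ := 1 + Qr r + 6 * k + b

def hpre (x : ℝ) (e : ℕ) : ℝ := ((2:ℝ)^e)⁻¹ * (2 * gf (e-1) x - 1)

lemma abs_hpre (x : ℝ) (e : ℕ) (he : 1 ≤ e) : |hpre x e| = ((2:ℝ)^e)⁻¹ * (1 - gf e x) := by
  obtain ⟨n, rfl⟩ : ∃ n, e = n + 1 := ⟨e - 1, by omega⟩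
  rw [hpre, abs_mul, abs_of_nonneg (by positivity : (0:ℝ) ≤ ((2:ℝ)^(n+1))⁻¹)]
  congr 1
  show |2 * gf n x - 1| = 1 - gf (n+1) x
  rw [show gf (n+1) x = tent (gf n x) from rfl, tent]
  ring

lemma Sf_split (x : ℝ) (m : ℕ) (hm : 1 ≤ m) :
    Sf x m = Sf x (m-1) + ((4:ℝ)^m)⁻¹ * gf m x := by
  obtain ⟨n, rfl⟩ : ∃ n, m = n + 1 := ⟨m - 1, by omega⟩
  simp [Sf]

def stagePairRows (r m φ k b : ℕ) : List (ℕ × ℝ) :=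
  if φ = 1 then
    (if b = 0 then [(1 + 2*k, 1/2), (2 + 2*k, 1/2)]
     else if b = 1 then [(1 + 2*k, 1/2), (2 + 2*k, -(1/2))]
     else [])
  else if φ = 2 then
    (if b = 0 then [(pbs r k 0, 1)]
     else if b = 1 then [(pbs r k 1, 1)]
     else if b = 2 then [(pbs r k 0, 1), (0, -(1/2))]
     else if b = 3 then [(pbs r k 1, 1), (0, -(1/2))]
     else [])
  else
    (if b = 0 then [(pbs r k 0, 1)]
     else if b = 1 then [(pbs r k 1, 1)]
     else if b = 2 then [(0, ((2:ℝ)^(φ-1))⁻¹), (pbs r k 2, -1)]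
     else if b = 3 then [(0, ((2:ℝ)^(φ-1))⁻¹), (pbs r k 3, -1)]
     else if b = 4 then [(pbs r k 4, 1), (0, ((4:ℝ)^(φ-2))⁻¹), (pbs r k 2, -(((2:ℝ)^(φ-2))⁻¹))]
     else [(pbs r k 5, 1), (0, ((4:ℝ)^(φ-2))⁻¹), (pbs r k 3, -(((2:ℝ)^(φ-2))⁻¹))])

def stageRows (r m t φ j : ℕ) : List (ℕ × ℝ) :=
  if m + 3 ≤ φ then [(j, 1)]
  else if j = 0 then [(0, 1)]
  else if φ = m + 2 then
    (if j < 1 + 2 ^ (qr r - t - 1) then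
      [(pbs r (j-1) 0, 1), (pbs r (j-1) 1, -1), (pbs r (j-1) 4, -1), (pbs r (j-1) 5, 1),
       (pbs r (j-1) 2, ((2:ℝ)^m)⁻¹), (pbs r (j-1) 3, -(((2:ℝ)^m)⁻¹))]
    else [])
  else if 1 + Qr r ≤ j ∧ j < 1 + Qr r + 6 * 2 ^ (qr r - t - 1) then
    stagePairRows r m φ ((j - (1 + Qr r)) / 6) ((j - (1 + Qr r)) % 6)
  else []

def rows (r m : ℕ) : ℕ → ℕ → List (ℕ × ℝ) := fun i j =>
  if i = 0 then
    (if j = 0 then [(0,1)]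
     else if j < 1 + r then [(j, 1)]
     else if j < 1 + Qr r then [(0, 1)]
     else [])
  else if i = LLd r m then [(1, 1)]
  else if LLd r m < i then []
  else stageRows r m ((i-1)/(2*m+5)) ((i-1) % (2*m+5) + 1) j

def rowEval (l : List (ℕ × ℝ)) (k : ℕ) : ℝ := (l.map (fun p => if p.1 = k then p.2 else 0)).sum

def net (r m : ℕ) : NN (pd r m) := ⟨fun i => Matrix.of (fun j k => rowEval (rows r m i ↑j) ↑k)⟩

/-! ## basic facts -/

section basic
variable {r m : ℕ}

lemma qr_pos (hr : 2 ≤ r) : 1 ≤ qr r := Nat.clog_pos (by norm_num) hr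
lemma Qr_pos : 1 ≤ Qr r := Nat.one_le_two_pow
lemma r_le_Qr : r ≤ Qr r := Nat.le_pow_clog (by norm_num) r
lemma Qr_two (hr : 2 ≤ r) : Qr r = 2 * 2 ^ (qr r - 1) := by
  have hq := qr_pos hr
  rw [Qr, ← pow_succ']
  congr 1
  omega
lemma pow_qr_pred_lt (hr : 2 ≤ r) : 2 ^ (qr r - 1) < r := by
  have h := Nat.pow_pred_clog_lt_self (b := 2) (by norm_num) (x := r) hr
  rw [Nat.pred_eq_sub_one] at h
  exact h
lemma Qr_le (hr : 2 ≤ r) : Qr r ≤ 2*r - 2 := by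
  have h := pow_qr_pred_lt hr
  have h2 := Qr_two hr
  omega

lemma pd_zero : pd r m 0 = r + 1 := rfl
lemma pd_eq (i : ℕ) (h1 : 1 ≤ i) (h2 : i ≤ LLd r m) : pd r m i = NWd r := by
  unfold pd; rw [if_neg (by omega), if_pos h2]
lemma pd_big (i : ℕ) (h : LLd r m < i) : pd r m i = 1 := by
  unfold pd; rw [if_neg (by omega), if_neg (by omega)]

lemma rows_stage (t φ i j : ℕ) (ht : t < qr r) (h1 : 1 ≤ φ) (h2 : φ ≤ 2*m+5)
    (hi : i = t*(2*m+5)+φ) :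
    rows r m i j = stageRows r m t φ j := by
  subst hi
  have hle : t*(2*m+5)+φ ≤ (2*m+5) * qr r := by
    have : (t+1)*(2*m+5) ≤ (qr r)*(2*m+5) := Nat.mul_le_mul_right _ (by omega)
    nlinarith
  unfold rows
  rw [if_neg (by omega), if_neg (by unfold LLd; omega), if_neg (by unfold LLd; omega)]
  have hd : (t*(2*m+5)+φ-1) = (2*m+5)*t + (φ-1) := by ring_nf; omega
  rw [hd, Nat.mul_add_div (by omega), Nat.mul_add_mod, Nat.div_eq_of_lt (by omega),
    Nat.mod_eq_of_lt (by omega)]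
  congr 1
  omega

lemma slot_cases (hr : 2 ≤ r) (j : ℕ) (hj : j < NWd r) :
    j = 0 ∨ (1 ≤ j ∧ j < 1 + Qr r) ∨
      (∃ k b, b < 6 ∧ j = pbs r k b ∧ k < 2^(qr r - 1)) := by
  by_cases h0 : j = 0
  · exact Or.inl h0
  by_cases h1 : j < 1 + Qr r
  · exact Or.inr (Or.inl ⟨by omega, h1⟩)
  · right; right
    have hQ := Qr_two hr
    refine ⟨(j - (1+Qr r))/6, (j-(1+Qr r))%6, by omega, ?_, ?_⟩
    · unfold pbs; omega
    · unfold NWd at hj; omega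

end basic

/-! ## invariant shape functions -/

def bndF (c : ℝ) (a : ℕ → ℝ) (n : ℕ) (j : ℕ) : ℝ :=
  if j = 0 then c else if j < 1 + n then a (j-1) else 0

def pairF (r : ℕ) (c : ℝ) (s : ℕ → ℕ → ℝ) (P : ℕ) (j : ℕ) : ℝ :=
  if j = 0 then c
  else if 1 + Qr r ≤ j ∧ j < 1 + Qr r + 6 * P then
    s ((j - (1 + Qr r)) % 6) ((j - (1 + Qr r)) / 6)
  else 0

lemma bndF_zero {c : ℝ} {a n} {j : ℕ} (h : j = 0) : bndF c a n j = c := by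
  unfold bndF; rw [if_pos h]
lemma bndF_at {c : ℝ} {a : ℕ → ℝ} {n : ℕ} (j i : ℕ) (h : j = 1 + i) (h2 : i < n) :
    bndF c a n j = a i := by
  unfold bndF; rw [if_neg (by omega), if_pos (by omega), show j - 1 = i from by omega]
lemma bndF_none {c : ℝ} {a : ℕ → ℝ} {n : ℕ} (j : ℕ) (h0 : j ≠ 0) (h : ¬ (j < 1+n)) :
    bndF c a n j = 0 := by
  unfold bndF; rw [if_neg h0, if_neg h]

lemma pairF_zero {r} {c : ℝ} {s P} {j : ℕ} (h : j = 0) : pairF r c s P j = c := by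
  unfold pairF; rw [if_pos h]
lemma pairF_at {r} {c : ℝ} {s : ℕ → ℕ → ℝ} {P : ℕ} (j k b : ℕ)
    (h : j = pbs r k b) (hk : k < P) (hb : b < 6) : pairF r c s P j = s b k := by
  have hpb : j = 1 + Qr r + 6*k + b := h
  unfold pairF
  rw [if_neg (by omega), if_pos (by omega),
    show (j - (1 + Qr r)) % 6 = b from by omega,
    show (j - (1 + Qr r)) / 6 = k from by omega]
lemma pairF_none {r} {c : ℝ} {s : ℕ → ℕ → ℝ} {P : ℕ} (j : ℕ) (h0 : j ≠ 0)
    (h : ¬ (1 + Qr r ≤ j ∧ j < 1 + Qr r + 6 * P)) : pairF r c s P j = 0 := by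
  unfold pairF; rw [if_neg h0, if_neg h]

/-! ## generic summation lemmas -/

lemma sum_rowEval {n : ℕ} (l : List (ℕ × ℝ)) (v : Fin n → ℝ) (G : ℕ → ℝ)
    (hG : ∀ k : Fin n, v k = G ↑k) :
    ∑ k : Fin n, rowEval l ↑k * v k
      = (l.map (fun p => if p.1 < n then p.2 * G p.1 else 0)).sum := by
  induction l with
  | nil => simp [rowEval]
  | cons p l ih =>
      have expand : ∀ k : Fin n, rowEval (p :: l) ↑k
          = (if p.1 = ↑k then p.2 else 0) + rowEval l ↑k := by
        intro k; simp [rowEval]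
      simp only [expand, add_mul]
      rw [Finset.sum_add_distrib, ih]
      simp only [List.map_cons, List.sum_cons]
      congr 1
      by_cases hp : p.1 < n
      · rw [if_pos hp]
        rw [Finset.sum_eq_single (⟨p.1, hp⟩ : Fin n)]
        · simp [hG]
        · intro b _ hb
          have : p.1 ≠ ↑b := by
            intro hc; apply hb; exact Fin.ext (by simp [← hc])
          rw [if_neg this, zero_mul]
        · intro hmem; exact absurd (Finset.mem_univ _) hmem
      · rw [if_neg hp]
        apply Finset.sum_eq_zero
        intro b _
        have : p.1 ≠ ↑b := by intro hc; apply hp; rw [hc]; exact b.isLt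
        rw [if_neg this, zero_mul]

lemma sum_abs_rowEval_le {n : ℕ} (l : List (ℕ × ℝ)) (v : Fin n → ℝ) (β : ℕ → ℝ)
    (hv : ∀ k, 0 ≤ v k) (hβ : ∀ j, 0 ≤ β j) (hvb : ∀ k : Fin n, v k ≤ β ↑k) :
    ∑ k : Fin n, |rowEval l ↑k| * v k ≤ (l.map (fun p => |p.2| * β p.1)).sum := by
  induction l with
  | nil => simp [rowEval]
  | cons p l ih =>
      have expand : ∀ k : Fin n, |rowEval (p :: l) ↑k|
          ≤ (if p.1 = ↑k then |p.2| else 0) + |rowEval l ↑k| := by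
        intro k
        have h1 : rowEval (p::l) ↑k = (if p.1 = ↑k then p.2 else 0) + rowEval l ↑k := by
          simp [rowEval]
        rw [h1]
        refine le_trans (abs_add_le _ _) (add_le_add_left ?_ _)
        split <;> simp
      calc ∑ k : Fin n, |rowEval (p :: l) ↑k| * v k
          ≤ ∑ k : Fin n, ((if p.1 = ↑k then |p.2| else 0) * v k + |rowEval l ↑k| * v k) := by
            apply Finset.sum_le_sum; intro k _
            have h2 := mul_le_mul_of_nonneg_right (expand k) (hv k)
            rw [add_mul] at h2; exact h2
        _ = (∑ k : Fin n, (if p.1 = ↑k then |p.2| else 0) * v k)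
            + ∑ k : Fin n, |rowEval l ↑k| * v k := Finset.sum_add_distrib
        _ ≤ |p.2| * β p.1 + (l.map (fun p => |p.2| * β p.1)).sum := by
            refine add_le_add ?_ ih
            by_cases hp : p.1 < n
            · rw [Finset.sum_eq_single (⟨p.1, hp⟩ : Fin n)]
              · rw [if_pos (by simp)]
                exact mul_le_mul_of_nonneg_left (hvb _) (abs_nonneg _)
              · intro b _ hb
                have : p.1 ≠ ↑b := by
                  intro hc; apply hb; exact Fin.ext (by simp [← hc])
                rw [if_neg this, zero_mul]
              · intro hmem; exact absurd (Finset.mem_univ _) hmem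
            · have : ∀ b : Fin n, (if p.1 = ↑b then |p.2| else 0) * v b = 0 := by
                intro b
                have : p.1 ≠ ↑b := by intro hc; apply hp; rw [hc]; exact b.isLt
                rw [if_neg this, zero_mul]
              rw [Finset.sum_congr rfl (fun b _ => this b), Finset.sum_const, smul_zero]
              exact mul_nonneg (abs_nonneg _) (hβ _)
        _ = _ := by simp

/-! ## step lemmas -/

lemma pre_step (r m : ℕ) (v : Fin (pd r m 0) → ℝ) (i : ℕ) (h2 : i + 1 ≤ LLd r m)
    (F : ℕ → ℝ)
    (hF : ∀ kk : Fin (pd r m (i+1)), (net r m).pre absAct i v kk = F ↑kk)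
    (jj : Fin (pd r m (i+1+1))) :
    (net r m).pre absAct (i+1) v jj
      = ((rows r m (i+1) ↑jj).map (fun p => if p.1 < NWd r then p.2 * |F p.1| else 0)).sum := by
  have hW : ∀ (a : Fin (pd r m (i+1+1))) (b : Fin (pd r m (i+1))),
      (net r m).W (i+1) a b = rowEval (rows r m (i+1) ↑a) ↑b := fun _ _ => rfl
  have hstep : (net r m).pre absAct (i+1) v jj
      = ∑ kk : Fin (pd r m (i+1)), rowEval (rows r m (i+1) ↑jj) ↑kk * |F ↑kk| := by
    show ((net r m).W (i+1) *ᵥ fun k => absAct ((net r m).pre absAct i v k)) jj = _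
    rw [Matrix.mulVec]
    refine Finset.sum_congr rfl fun kk _ => ?_
    show (net r m).W (i+1) jj kk * |NN.pre absAct (net r m) i v kk| = _
    rw [hW, hF kk]
  rw [hstep, sum_rowEval (rows r m (i+1) ↑jj) _ (fun j => |F j|) (fun k => rfl)]
  simp only [pd_eq (i+1) (by omega) h2]

lemma pre_zero_step (r m : ℕ) (v : Fin (pd r m 0) → ℝ) (G : ℕ → ℝ)
    (hG : ∀ kk : Fin (pd r m 0), v kk = G ↑kk)
    (jj : Fin (pd r m 1)) :
    (net r m).pre absAct 0 v jj
      = ((rows r m 0 ↑jj).map (fun p => if p.1 < r + 1 then p.2 * G p.1 else 0)).sum := by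
  have hstep : (net r m).pre absAct 0 v jj
      = ∑ kk : Fin (pd r m 0), rowEval (rows r m 0 ↑jj) ↑kk * v kk := by
    show ((net r m).W 0 *ᵥ v) jj = _
    rw [Matrix.mulVec]
    rfl
  rw [hstep, sum_rowEval (rows r m 0 ↑jj) _ G hG]
  simp only [pd_zero]
  rfl

lemma absProd_nonneg (r m : ℕ) :
    ∀ i (jj : Fin (pd r m (i+1))) (kk : Fin (pd r m 0)),
      0 ≤ (net r m).absProd i jj kk := by
  intro i
  induction i with
  | zero => intro jj kk; exact abs_nonneg _
  | succ i ih =>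
      intro jj kk
      show (0:ℝ) ≤ ((Matrix.of fun j k => |(net r m).W (i+1) j k|) * (net r m).absProd i) jj kk
      rw [Matrix.mul_apply]
      exact Finset.sum_nonneg fun l _ => mul_nonneg (abs_nonneg _) (ih l kk)

lemma bnd_step (r m : ℕ) (i : ℕ) (h2 : i+1 ≤ LLd r m) (β : ℕ → ℝ) (hβ : ∀ j, 0 ≤ β j)
    (hF : ∀ (ll : Fin (pd r m (i+1))) (kk : Fin (pd r m 0)),
        (net r m).absProd i ll kk ≤ β ↑ll)
    (jj : Fin (pd r m (i+1+1))) (kk : Fin (pd r m 0)) :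
    (net r m).absProd (i+1) jj kk
      ≤ ((rows r m (i+1) ↑jj).map (fun p => |p.2| * β p.1)).sum := by
  show ((Matrix.of fun j k => |(net r m).W (i+1) j k|) * (net r m).absProd i) jj kk ≤ _
  rw [Matrix.mul_apply]
  have : ∀ l : Fin (pd r m (i+1)),
      (Matrix.of fun j k => |(net r m).W (i+1) j k|) jj l = |rowEval (rows r m (i+1) ↑jj) ↑l| := by
    intro l; simp [net]
  simp only [this]
  exact sum_abs_rowEval_le _ _ β (fun l => absProd_nonneg r m i l kk) hβ (fun l => hF l kk)
/-! ## mid-stage invariant shapes -/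

def sMid (m : ℕ) (a : ℕ → ℝ) (e : ℕ) (b k : ℕ) : ℝ :=
  if b = 0 then (a (2*k) + a (2*k+1))/2
  else if b = 1 then (if e = 0 then (a (2*k) - a (2*k+1))/2 else |a (2*k) - a (2*k+1)|/2)
  else if e = 0 then 0
  else if b = 2 then hpre ((a (2*k) + a (2*k+1))/2) e
  else if b = 3 then hpre (|a (2*k) - a (2*k+1)|/2) e
  else if b = 4 then Sf ((a (2*k) + a (2*k+1))/2) (e-1)
  else if b = 5 then Sf (|a (2*k) - a (2*k+1)|/2) (e-1)
  else 0

def zf (m : ℕ) (a : ℕ → ℝ) (k : ℕ) : ℝ :=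
  sq m ((a (2*k) + a (2*k+1))/2) - sq m (|a (2*k) - a (2*k+1)|/2)

section stage
variable {r m : ℕ}

lemma NWd_pos : 0 < NWd r := by unfold NWd; omega

lemma stepA (hr : 2 ≤ r) (hm : 1 ≤ m) (t : ℕ) (ht : t < qr r)
    (v : Fin (pd r m 0) → ℝ) (a : ℕ → ℝ) (ha : ∀ i, a i ∈ Set.Icc (0:ℝ) 1)
    (hF : ∀ kk : Fin (pd r m (t*(2*m+5)+1)), (net r m).pre absAct (t*(2*m+5)) v kk
            = bndF 1 a (2^(qr r - t)) ↑kk) :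
    ∀ jj : Fin (pd r m (t*(2*m+5)+1+1)),
      (net r m).pre absAct (t*(2*m+5)+1) v jj
        = pairF r 1 (sMid m a 0) (2^(qr r - t - 1)) ↑jj := by
  intro jj
  have hLL : LLd r m = (2*m+5)*(qr r)+1 := rfl
  have hts : t*(2*m+5) + (2*m+5) ≤ (2*m+5)*(qr r) := by
    have : (t+1)*(2*m+5) ≤ (qr r)*(2*m+5) := Nat.mul_le_mul_right _ (by omega)
    nlinarith
  have hQ2 := Qr_two hr
  have hNW : NWd r = 4 * Qr r + 1 := rfl
  have hc2 : 2^(qr r - t) = 2 * 2^(qr r - t - 1) := by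
    rw [← pow_succ']; congr 1; omega
  have hPle : 2^(qr r - t - 1) ≤ 2^(qr r - 1) := Nat.pow_le_pow_right (by omega) (by omega)
  rw [pre_step r m v (t*(2*m+5)) (by omega) _ hF jj]
  rw [rows_stage t 1 _ ↑jj ht (by omega) (by omega) rfl]
  have hjj : ↑jj < NWd r :=
    lt_of_lt_of_le jj.isLt (le_of_eq (pd_eq (t*(2*m+5)+1+1) (by omega) (by omega)))
  rcases slot_cases hr ↑jj hjj with h0 | ⟨h1, h2⟩ | ⟨k, b, hb, hpb, hk⟩
  · rw [h0, pairF_zero rfl]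
    rw [stageRows, if_neg (by omega), if_pos rfl]
    simp only [List.map_cons, List.map_nil, List.sum_cons, List.sum_nil, add_zero]
    rw [if_pos (NWd_pos), bndF_zero rfl]
    norm_num
  · rw [stageRows, if_neg (by omega), if_neg (by omega), if_neg (by omega),
      if_neg (by omega)]
    rw [pairF_none _ (by omega) (by omega)]
    simp
  · have hpbs : pbs r k b = 1 + Qr r + 6*k + b := rfl
    by_cases hkP : k < 2^(qr r - t - 1)
    · rw [stageRows, if_neg (by omega), if_neg (by omega), if_neg (by omega),
        if_pos (by omega)]
      rw [show (↑jj - (1 + Qr r)) / 6 = k from by omega,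
          show (↑jj - (1 + Qr r)) % 6 = b from by omega]
      rw [pairF_at ↑jj k b hpb hkP hb]
      interval_cases b
      · rw [stagePairRows, if_pos rfl, if_pos rfl]
        simp only [List.map_cons, List.map_nil, List.sum_cons, List.sum_nil, add_zero]
        rw [if_pos (by omega), if_pos (by omega)]
        rw [bndF_at (1+2*k) (2*k) rfl (by omega), bndF_at (2+2*k) (2*k+1) (by omega) (by omega)]
        rw [abs_of_nonneg (ha (2*k)).1, abs_of_nonneg (ha (2*k+1)).1]
        rw [sMid, if_pos rfl]
        ring
      · rw [stagePairRows, if_pos rfl, if_neg (by omega), if_pos rfl]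
        simp only [List.map_cons, List.map_nil, List.sum_cons, List.sum_nil, add_zero]
        rw [if_pos (by omega), if_pos (by omega)]
        rw [bndF_at (1+2*k) (2*k) rfl (by omega), bndF_at (2+2*k) (2*k+1) (by omega) (by omega)]
        rw [abs_of_nonneg (ha (2*k)).1, abs_of_nonneg (ha (2*k+1)).1]
        rw [sMid, if_neg (by omega), if_pos rfl, if_pos rfl]
        ring
      all_goals
        rw [stagePairRows, if_pos rfl, if_neg (by omega), if_neg (by omega)]
        rw [sMid, if_neg (by omega), if_neg (by omega), if_pos rfl]
        simp
    · rw [stageRows, if_neg (by omega), if_neg (by omega), if_neg (by omega),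
        if_neg (by omega)]
      rw [pairF_none _ (by omega) (by omega)]
      simp
end stage

section stage2
variable {r m : ℕ}

/-! ### scalar helpers for the hat chain -/

lemma pow2_ne (e : ℕ) : ((2:ℝ)^e) ≠ 0 := by positivity

lemma hpre_one (x : ℝ) : hpre x 1 = x - 1/2 := by
  rw [hpre]
  norm_num [gf]
  ring

lemma hpre_step' (x : ℝ) (e : ℕ) (he : 1 ≤ e) :
    ((2:ℝ)^(e+1))⁻¹ - |hpre x e| = hpre x (e+1) := by
  rw [abs_hpre x e he, hpre, show e+1-1 = e from by omega, pow_succ]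
  have h2 := pow2_ne e
  field_simp
  ring

lemma four_pow_eq (e : ℕ) : (4:ℝ)^e = (2:ℝ)^e * (2:ℝ)^e := by
  rw [show (4:ℝ) = 2*2 from by norm_num, mul_pow]

lemma Sf_step' (x : ℝ) (e : ℕ) (he : 1 ≤ e) :
    Sf x (e-1) + ((4:ℝ)^e)⁻¹ - ((2:ℝ)^e)⁻¹ * |hpre x e| = Sf x e := by
  rw [abs_hpre x e he, Sf_split x e he, four_pow_eq]
  have h2 := pow2_ne e
  field_simp
  ring

/-! ### sMid evaluation lemmas -/

lemma sMid_0 {a e k} : sMid m a e 0 k = (a (2*k) + a (2*k+1))/2 := by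
  rw [sMid, if_pos rfl]
lemma sMid_d0 {a k} : sMid m a 0 1 k = (a (2*k) - a (2*k+1))/2 := by
  rw [sMid, if_neg (by omega), if_pos rfl, if_pos rfl]
lemma sMid_v {a e k} (he : 1 ≤ e) : sMid m a e 1 k = |a (2*k) - a (2*k+1)|/2 := by
  rw [sMid, if_neg (by omega), if_pos rfl, if_neg (by omega)]
lemma sMid_2 {a e k} (he : 1 ≤ e) : sMid m a e 2 k = hpre ((a (2*k) + a (2*k+1))/2) e := by
  rw [sMid, if_neg (by omega), if_neg (by omega), if_neg (by omega), if_pos rfl]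
lemma sMid_3 {a e k} (he : 1 ≤ e) : sMid m a e 3 k = hpre (|a (2*k) - a (2*k+1)|/2) e := by
  rw [sMid, if_neg (by omega), if_neg (by omega), if_neg (by omega), if_neg (by omega), if_pos rfl]
lemma sMid_4 {a e k} (he : 1 ≤ e) : sMid m a e 4 k = Sf ((a (2*k) + a (2*k+1))/2) (e-1) := by
  rw [sMid, if_neg (by omega), if_neg (by omega), if_neg (by omega), if_neg (by omega),
    if_neg (by omega), if_pos rfl]
lemma sMid_5 {a e k} (he : 1 ≤ e) : sMid m a e 5 k = Sf (|a (2*k) - a (2*k+1)|/2) (e-1) := by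
  rw [sMid, if_neg (by omega), if_neg (by omega), if_neg (by omega), if_neg (by omega),
    if_neg (by omega), if_neg (by omega), if_pos rfl]

lemma abs_half_diff (p q : ℝ) : |(p - q)/2| = |p - q|/2 := by
  rw [abs_div]
  norm_num

/-! ### layer B -/

lemma stepB (hr : 2 ≤ r) (hm : 1 ≤ m) (t i : ℕ) (ht : t < qr r) (hi : i = t*(2*m+5)+1)
    (v : Fin (pd r m 0) → ℝ) (a : ℕ → ℝ) (ha : ∀ i, a i ∈ Set.Icc (0:ℝ) 1)
    (hF : ∀ kk : Fin (pd r m (i+1)), (net r m).pre absAct i v kk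
            = pairF r 1 (sMid m a 0) (2^(qr r - t - 1)) ↑kk) :
    ∀ jj : Fin (pd r m (i+1+1)),
      (net r m).pre absAct (i+1) v jj
        = pairF r 1 (sMid m a 1) (2^(qr r - t - 1)) ↑jj := by
  intro jj
  have hLL : LLd r m = (2*m+5)*(qr r)+1 := rfl
  have hts : t*(2*m+5) + (2*m+5) ≤ (2*m+5)*(qr r) := by
    have : (t+1)*(2*m+5) ≤ (qr r)*(2*m+5) := Nat.mul_le_mul_right _ (by omega)
    nlinarith
  have hQ2 := Qr_two hr
  have hNW : NWd r = 4 * Qr r + 1 := rfl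
  have hPle : 2^(qr r - t - 1) ≤ 2^(qr r - 1) := Nat.pow_le_pow_right (by omega) (by omega)
  rw [pre_step r m v i (by omega) _ hF jj]
  rw [rows_stage t 2 (i+1) ↑jj ht (by omega) (by omega) (by omega)]
  have hjj : ↑jj < NWd r :=
    lt_of_lt_of_le jj.isLt (le_of_eq (pd_eq (i+1+1) (by omega) (by omega)))
  rcases slot_cases hr ↑jj hjj with h0 | ⟨h1, h2⟩ | ⟨k, b, hb, hpb, hk⟩
  · rw [h0, pairF_zero rfl]
    rw [stageRows, if_neg (by omega), if_pos rfl]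
    simp only [List.map_cons, List.map_nil, List.sum_cons, List.sum_nil, add_zero]
    rw [if_pos (NWd_pos), pairF_zero rfl]
    norm_num
  · rw [stageRows, if_neg (by omega), if_neg (by omega), if_neg (by omega), if_neg (by omega)]
    rw [pairF_none _ (by omega) (by omega)]
    simp
  · have hpbs : pbs r k b = 1 + Qr r + 6*k + b := rfl
    have hpbs0 : pbs r k 0 = 1 + Qr r + 6*k + 0 := rfl
    have hpbs1 : pbs r k 1 = 1 + Qr r + 6*k + 1 := rfl
    have hpbs2 : pbs r k 2 = 1 + Qr r + 6*k + 2 := rfl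
    have hpbs3 : pbs r k 3 = 1 + Qr r + 6*k + 3 := rfl
    have hpbs4 : pbs r k 4 = 1 + Qr r + 6*k + 4 := rfl
    have hpbs5 : pbs r k 5 = 1 + Qr r + 6*k + 5 := rfl
    have hA := ha (2*k); have hB := ha (2*k+1)
    have huv := uv_mem hA hB
    by_cases hkP : k < 2^(qr r - t - 1)
    · rw [stageRows, if_neg (by omega), if_neg (by omega), if_neg (by omega), if_pos (by omega)]
      rw [show (↑jj - (1 + Qr r)) / 6 = k from by omega,
          show (↑jj - (1 + Qr r)) % 6 = b from by omega]
      rw [pairF_at ↑jj k b hpb hkP hb]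
      have hu0 : pairF r 1 (sMid m a 0) (2^(qr r-t-1)) (pbs r k 0) = (a (2*k)+a (2*k+1))/2 := by
        rw [pairF_at _ k 0 rfl hkP (by omega), sMid_0]
      have hd0 : pairF r 1 (sMid m a 0) (2^(qr r-t-1)) (pbs r k 1) = (a (2*k)-a (2*k+1))/2 := by
        rw [pairF_at _ k 1 rfl hkP (by omega), sMid_d0]
      interval_cases b
      · rw [stagePairRows, if_neg (by omega), if_pos rfl, if_pos rfl]
        simp only [List.map_cons, List.map_nil, List.sum_cons, List.sum_nil, add_zero]
        rw [if_pos (by omega), hu0, abs_of_nonneg huv.1.1, sMid_0]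
        ring
      · rw [stagePairRows, if_neg (by omega), if_pos rfl, if_neg (by omega), if_pos rfl]
        simp only [List.map_cons, List.map_nil, List.sum_cons, List.sum_nil, add_zero]
        rw [if_pos (by omega), hd0, abs_half_diff, sMid_v (le_refl 1)]
        ring
      · rw [stagePairRows, if_neg (by omega), if_pos rfl, if_neg (by omega), if_neg (by omega),
          if_pos rfl]
        simp only [List.map_cons, List.map_nil, List.sum_cons, List.sum_nil, add_zero]
        rw [if_pos (by omega), if_pos (NWd_pos), hu0, abs_of_nonneg huv.1.1,
          pairF_zero rfl, sMid_2 (le_refl 1), hpre_one, abs_one]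
        ring
      · rw [stagePairRows, if_neg (by omega), if_pos rfl, if_neg (by omega), if_neg (by omega),
          if_neg (by omega), if_pos rfl]
        simp only [List.map_cons, List.map_nil, List.sum_cons, List.sum_nil, add_zero]
        rw [if_pos (by omega), if_pos (NWd_pos), hd0, abs_half_diff,
          pairF_zero rfl, sMid_3 (le_refl 1), hpre_one, abs_one]
        ring
      · rw [stagePairRows, if_neg (by omega), if_pos rfl, if_neg (by omega), if_neg (by omega),
          if_neg (by omega), if_neg (by omega)]
        rw [sMid_4 (le_refl 1)]
        simp [Sf]
      · rw [stagePairRows, if_neg (by omega), if_pos rfl, if_neg (by omega), if_neg (by omega),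
          if_neg (by omega), if_neg (by omega)]
        rw [sMid_5 (le_refl 1)]
        simp [Sf]
    · rw [stageRows, if_neg (by omega), if_neg (by omega), if_neg (by omega), if_neg (by omega)]
      rw [pairF_none _ (by omega) (by omega)]
      simp

end stage2

section stage3
variable {r m : ℕ}

lemma stepC (hr : 2 ≤ r) (hm : 1 ≤ m) (t e i : ℕ) (ht : t < qr r)
    (he1 : 1 ≤ e) (he2 : e + 1 ≤ m) (hi : i = t*(2*m+5)+1+e)
    (v : Fin (pd r m 0) → ℝ) (a : ℕ → ℝ) (ha : ∀ i, a i ∈ Set.Icc (0:ℝ) 1)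
    (hF : ∀ kk : Fin (pd r m (i+1)), (net r m).pre absAct i v kk
            = pairF r 1 (sMid m a e) (2^(qr r - t - 1)) ↑kk) :
    ∀ jj : Fin (pd r m (i+1+1)),
      (net r m).pre absAct (i+1) v jj
        = pairF r 1 (sMid m a (e+1)) (2^(qr r - t - 1)) ↑jj := by
  intro jj
  have hLL : LLd r m = (2*m+5)*(qr r)+1 := rfl
  have hts : t*(2*m+5) + (2*m+5) ≤ (2*m+5)*(qr r) := by
    have : (t+1)*(2*m+5) ≤ (qr r)*(2*m+5) := Nat.mul_le_mul_right _ (by omega)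
    nlinarith
  have hQ2 := Qr_two hr
  have hNW : NWd r = 4 * Qr r + 1 := rfl
  have hPle : 2^(qr r - t - 1) ≤ 2^(qr r - 1) := Nat.pow_le_pow_right (by omega) (by omega)
  rw [pre_step r m v i (by omega) _ hF jj]
  rw [rows_stage t (e+2) (i+1) ↑jj ht (by omega) (by omega) (by omega)]
  have hjj : ↑jj < NWd r :=
    lt_of_lt_of_le jj.isLt (le_of_eq (pd_eq (i+1+1) (by omega) (by omega)))
  rcases slot_cases hr ↑jj hjj with h0 | ⟨h1, h2⟩ | ⟨k, b, hb, hpb, hk⟩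
  · rw [h0, pairF_zero rfl]
    rw [stageRows, if_neg (by omega), if_pos rfl]
    simp only [List.map_cons, List.map_nil, List.sum_cons, List.sum_nil, add_zero]
    rw [if_pos (NWd_pos), pairF_zero rfl]
    norm_num
  · rw [stageRows, if_neg (by omega), if_neg (by omega), if_neg (by omega), if_neg (by omega)]
    rw [pairF_none _ (by omega) (by omega)]
    simp
  · have hpbs : pbs r k b = 1 + Qr r + 6*k + b := rfl
    have hpbs0 : pbs r k 0 = 1 + Qr r + 6*k + 0 := rfl
    have hpbs1 : pbs r k 1 = 1 + Qr r + 6*k + 1 := rfl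
    have hpbs2 : pbs r k 2 = 1 + Qr r + 6*k + 2 := rfl
    have hpbs3 : pbs r k 3 = 1 + Qr r + 6*k + 3 := rfl
    have hpbs4 : pbs r k 4 = 1 + Qr r + 6*k + 4 := rfl
    have hpbs5 : pbs r k 5 = 1 + Qr r + 6*k + 5 := rfl
    have hA := ha (2*k); have hB := ha (2*k+1)
    have huv := uv_mem hA hB
    have hvnn : (0:ℝ) ≤ |a (2*k) - a (2*k+1)|/2 := by positivity
    by_cases hkP : k < 2^(qr r - t - 1)
    · rw [stageRows, if_neg (by omega), if_neg (by omega), if_neg (by omega), if_pos (by omega)]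
      rw [show (↑jj - (1 + Qr r)) / 6 = k from by omega,
          show (↑jj - (1 + Qr r)) % 6 = b from by omega]
      rw [pairF_at ↑jj k b hpb hkP hb]
      have hu0 : pairF r 1 (sMid m a e) (2^(qr r-t-1)) (pbs r k 0) = (a (2*k)+a (2*k+1))/2 := by
        rw [pairF_at _ k 0 rfl hkP (by omega), sMid_0]
      have hd0 : pairF r 1 (sMid m a e) (2^(qr r-t-1)) (pbs r k 1) = |a (2*k)-a (2*k+1)|/2 := by
        rw [pairF_at _ k 1 rfl hkP (by omega), sMid_v he1]
      have h20 : pairF r 1 (sMid m a e) (2^(qr r-t-1)) (pbs r k 2)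
          = hpre ((a (2*k)+a (2*k+1))/2) e := by
        rw [pairF_at _ k 2 rfl hkP (by omega), sMid_2 he1]
      have h30 : pairF r 1 (sMid m a e) (2^(qr r-t-1)) (pbs r k 3)
          = hpre (|a (2*k)-a (2*k+1)|/2) e := by
        rw [pairF_at _ k 3 rfl hkP (by omega), sMid_3 he1]
      have h40 : pairF r 1 (sMid m a e) (2^(qr r-t-1)) (pbs r k 4)
          = Sf ((a (2*k)+a (2*k+1))/2) (e-1) := by
        rw [pairF_at _ k 4 rfl hkP (by omega), sMid_4 he1]
      have h50 : pairF r 1 (sMid m a e) (2^(qr r-t-1)) (pbs r k 5)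
          = Sf (|a (2*k)-a (2*k+1)|/2) (e-1) := by
        rw [pairF_at _ k 5 rfl hkP (by omega), sMid_5 he1]
      interval_cases b
      · rw [stagePairRows, if_neg (by omega), if_neg (by omega), if_pos rfl]
        simp only [List.map_cons, List.map_nil, List.sum_cons, List.sum_nil, add_zero]
        rw [if_pos (by omega), hu0, abs_of_nonneg huv.1.1, sMid_0]
        ring
      · rw [stagePairRows, if_neg (by omega), if_neg (by omega), if_neg (by omega), if_pos rfl]
        simp only [List.map_cons, List.map_nil, List.sum_cons, List.sum_nil, add_zero]
        rw [if_pos (by omega), hd0, abs_of_nonneg hvnn, sMid_v (by omega)]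
        ring
      · rw [stagePairRows, if_neg (by omega), if_neg (by omega), if_neg (by omega),
          if_neg (by omega), if_pos rfl]
        simp only [List.map_cons, List.map_nil, List.sum_cons, List.sum_nil, add_zero]
        rw [if_pos (NWd_pos), if_pos (by omega), pairF_zero rfl, abs_one, h20,
          show e+2-1 = e+1 from rfl, sMid_2 (by omega),
          ← hpre_step' ((a (2*k)+a (2*k+1))/2) e he1]
        ring
      · rw [stagePairRows, if_neg (by omega), if_neg (by omega), if_neg (by omega),
          if_neg (by omega), if_neg (by omega), if_pos rfl]
        simp only [List.map_cons, List.map_nil, List.sum_cons, List.sum_nil, add_zero]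
        rw [if_pos (NWd_pos), if_pos (by omega), pairF_zero rfl, abs_one, h30,
          show e+2-1 = e+1 from rfl, sMid_3 (by omega),
          ← hpre_step' (|a (2*k)-a (2*k+1)|/2) e he1]
        ring
      · rw [stagePairRows, if_neg (by omega), if_neg (by omega), if_neg (by omega),
          if_neg (by omega), if_neg (by omega), if_neg (by omega), if_pos rfl]
        simp only [List.map_cons, List.map_nil, List.sum_cons, List.sum_nil, add_zero]
        rw [if_pos (by omega), if_pos (NWd_pos), if_pos (by omega), pairF_zero rfl, abs_one,
          h40, h20, abs_of_nonneg (Sf_nonneg (e-1) huv.1),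
          show e+2-2 = e from rfl, sMid_4 (by omega), show e+1-1 = e from rfl,
          ← Sf_step' ((a (2*k)+a (2*k+1))/2) e he1]
        ring
      · rw [stagePairRows, if_neg (by omega), if_neg (by omega), if_neg (by omega),
          if_neg (by omega), if_neg (by omega), if_neg (by omega), if_neg (by omega)]
        simp only [List.map_cons, List.map_nil, List.sum_cons, List.sum_nil, add_zero]
        rw [if_pos (by omega), if_pos (NWd_pos), if_pos (by omega), pairF_zero rfl, abs_one,
          h50, h30, abs_of_nonneg (Sf_nonneg (e-1) huv.2),
          show e+2-2 = e from rfl, sMid_5 (by omega), show e+1-1 = e from rfl,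
          ← Sf_step' (|a (2*k)-a (2*k+1)|/2) e he1]
        ring
    · rw [stageRows, if_neg (by omega), if_neg (by omega), if_neg (by omega), if_neg (by omega)]
      rw [pairF_none _ (by omega) (by omega)]
      simp

lemma stepD (hr : 2 ≤ r) (hm : 1 ≤ m) (t i : ℕ) (ht : t < qr r)
    (hi : i = t*(2*m+5)+1+m)
    (v : Fin (pd r m 0) → ℝ) (a : ℕ → ℝ) (ha : ∀ i, a i ∈ Set.Icc (0:ℝ) 1)
    (hF : ∀ kk : Fin (pd r m (i+1)), (net r m).pre absAct i v kk
            = pairF r 1 (sMid m a m) (2^(qr r - t - 1)) ↑kk) :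
    ∀ jj : Fin (pd r m (i+1+1)),
      (net r m).pre absAct (i+1) v jj
        = bndF 1 (zf m a) (2^(qr r - t - 1)) ↑jj := by
  intro jj
  have hLL : LLd r m = (2*m+5)*(qr r)+1 := rfl
  have hts : t*(2*m+5) + (2*m+5) ≤ (2*m+5)*(qr r) := by
    have : (t+1)*(2*m+5) ≤ (qr r)*(2*m+5) := Nat.mul_le_mul_right _ (by omega)
    nlinarith
  have hQ2 := Qr_two hr
  have hNW : NWd r = 4 * Qr r + 1 := rfl
  have hPle : 2^(qr r - t - 1) ≤ 2^(qr r - 1) := Nat.pow_le_pow_right (by omega) (by omega)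
  rw [pre_step r m v i (by omega) _ hF jj]
  rw [rows_stage t (m+2) (i+1) ↑jj ht (by omega) (by omega) (by omega)]
  have hjj : ↑jj < NWd r :=
    lt_of_lt_of_le jj.isLt (le_of_eq (pd_eq (i+1+1) (by omega) (by omega)))
  rcases slot_cases hr ↑jj hjj with h0 | ⟨h1, h2⟩ | ⟨k, b, hb, hpb, hk⟩
  · rw [h0, bndF_zero rfl]
    rw [stageRows, if_neg (by omega), if_pos rfl]
    simp only [List.map_cons, List.map_nil, List.sum_cons, List.sum_nil, add_zero]
    rw [if_pos (NWd_pos), pairF_zero rfl]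
    norm_num
  · by_cases hjP : (↑jj : ℕ) < 1 + 2^(qr r - t - 1)
    · have hk' : (↑jj : ℕ) - 1 < 2^(qr r - t - 1) := by omega
      generalize hkg : (↑jj : ℕ) - 1 = k at hk'
      have hjk : (↑jj : ℕ) = 1 + k := by omega
      have hpbs0 : pbs r k 0 = 1 + Qr r + 6*k + 0 := rfl
      have hpbs1 : pbs r k 1 = 1 + Qr r + 6*k + 1 := rfl
      have hpbs2 : pbs r k 2 = 1 + Qr r + 6*k + 2 := rfl
      have hpbs3 : pbs r k 3 = 1 + Qr r + 6*k + 3 := rfl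
      have hpbs4 : pbs r k 4 = 1 + Qr r + 6*k + 4 := rfl
      have hpbs5 : pbs r k 5 = 1 + Qr r + 6*k + 5 := rfl
      have hA := ha (2*k); have hB := ha (2*k+1)
      have huv := uv_mem hA hB
      rw [stageRows, if_neg (by omega), if_neg (by omega), if_pos rfl, if_pos hjP]
      rw [hkg]
      simp only [List.map_cons, List.map_nil, List.sum_cons, List.sum_nil, add_zero]
      rw [if_pos (by omega), if_pos (by omega), if_pos (by omega), if_pos (by omega),
        if_pos (by omega), if_pos (by omega)]
      rw [pairF_at _ k 0 rfl hk' (by omega), sMid_0,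
          pairF_at _ k 1 rfl hk' (by omega), sMid_v hm,
          pairF_at _ k 4 rfl hk' (by omega), sMid_4 hm,
          pairF_at _ k 5 rfl hk' (by omega), sMid_5 hm,
          pairF_at _ k 2 rfl hk' (by omega), sMid_2 hm,
          pairF_at _ k 3 rfl hk' (by omega), sMid_3 hm]
      rw [abs_of_nonneg huv.1.1, abs_of_nonneg (by positivity : (0:ℝ) ≤ |a (2*k)-a (2*k+1)|/2),
        abs_of_nonneg (Sf_nonneg (m-1) huv.1), abs_of_nonneg (Sf_nonneg (m-1) huv.2),
        abs_hpre _ m hm, abs_hpre _ m hm]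
      rw [bndF_at ↑jj k hjk hk']
      rw [zf, sq, sq, Sf_split _ m hm, Sf_split _ m hm, four_pow_eq]
      have h2 := pow2_ne m
      field_simp
      ring
    · rw [stageRows, if_neg (by omega), if_neg (by omega), if_pos rfl, if_neg hjP]
      rw [bndF_none _ (by omega) (by omega)]
      simp
  · have hpbs : pbs r k b = 1 + Qr r + 6*k + b := rfl
    rw [stageRows, if_neg (by omega), if_neg (by omega), if_pos rfl, if_neg (by omega)]
    rw [bndF_none _ (by omega) (by omega)]
    simp

lemma stepG (t ψ i : ℕ) (ht : t < qr r) (hψ1 : m+2 ≤ ψ) (hψ2 : ψ ≤ 2*m+4)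
    (hi : i = t*(2*m+5)+ψ)
    (v : Fin (pd r m 0) → ℝ) (F : ℕ → ℝ)
    (hF : ∀ kk : Fin (pd r m (i+1)), (net r m).pre absAct i v kk = F ↑kk) :
    ∀ jj : Fin (pd r m (i+1+1)),
      (net r m).pre absAct (i+1) v jj = |F ↑jj| := by
  intro jj
  have hLL : LLd r m = (2*m+5)*(qr r)+1 := rfl
  have hts : t*(2*m+5) + (2*m+5) ≤ (2*m+5)*(qr r) := by
    have : (t+1)*(2*m+5) ≤ (qr r)*(2*m+5) := Nat.mul_le_mul_right _ (by omega)
    nlinarith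
  rw [pre_step r m v i (by omega) _ hF jj]
  rw [rows_stage t (ψ+1) (i+1) ↑jj ht (by omega) (by omega) (by omega)]
  have hjj : ↑jj < NWd r :=
    lt_of_lt_of_le jj.isLt (le_of_eq (pd_eq (i+1+1) (by omega) (by omega)))
  rw [stageRows, if_pos (by omega)]
  simp only [List.map_cons, List.map_nil, List.sum_cons, List.sum_nil, add_zero]
  rw [if_pos hjj, one_mul]

end stage3

/-! ## input encoding and ideal values -/

def Xf (r : ℕ) (x : Fin r → ℝ) : ℕ → ℝ := fun i => if h : i < r then x ⟨i, h⟩ else 1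

def Aseq (m : ℕ) (X : ℕ → ℝ) : ℕ → ℕ → ℝ
  | 0 => X
  | t+1 => fun k => mulA m (Aseq m X t (2*k)) (Aseq m X t (2*k+1))

lemma Xf_mem {r : ℕ} {x : Fin r → ℝ} (hx : ∀ i, x i ∈ Set.Icc (0:ℝ) 1) (i : ℕ) :
    Xf r x i ∈ Set.Icc (0:ℝ) 1 := by
  unfold Xf
  split
  · exact hx _
  · exact ⟨zero_le_one, le_rfl⟩

lemma Aseq_mem {m : ℕ} {X : ℕ → ℝ} (hX : ∀ i, X i ∈ Set.Icc (0:ℝ) 1) :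
    ∀ t i, Aseq m X t i ∈ Set.Icc (0:ℝ) 1 := by
  intro t
  induction t with
  | zero => exact hX
  | succ t ih => intro i; exact mulA_mem m (ih _) (ih _)

section stage4
variable {r m : ℕ}

lemma stage_step (hr : 2 ≤ r) (hm : 1 ≤ m) (t : ℕ) (ht : t < qr r)
    (v : Fin (pd r m 0) → ℝ) (a : ℕ → ℝ) (ha : ∀ i, a i ∈ Set.Icc (0:ℝ) 1)
    (hF : ∀ kk : Fin (pd r m (t*(2*m+5)+1)), (net r m).pre absAct (t*(2*m+5)) v kk
            = bndF 1 a (2^(qr r - t)) ↑kk) :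
    ∀ jj : Fin (pd r m ((t+1)*(2*m+5)+1)),
      (net r m).pre absAct ((t+1)*(2*m+5)) v jj
        = bndF 1 (fun k => mulA m (a (2*k)) (a (2*k+1))) (2^(qr r - (t+1))) ↑jj := by
  have h1 := stepA hr hm t ht v a ha hF
  have h2 := stepB hr hm t (t*(2*m+5)+1) ht rfl v a ha h1
  have hC : ∀ e, 1 ≤ e → e ≤ m → ∀ jj : Fin (pd r m (t*(2*m+5)+1+e+1)),
      (net r m).pre absAct (t*(2*m+5)+1+e) v jj
        = pairF r 1 (sMid m a e) (2^(qr r - t - 1)) ↑jj := by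
    intro e he1
    induction e, he1 using Nat.le_induction with
    | base => intro _; exact h2
    | succ e he ih =>
        intro hem
        exact stepC hr hm t e (t*(2*m+5)+1+e) ht he (by omega) rfl v a ha (ih (by omega))
  have h3 := hC m hm le_rfl
  have h4 := stepD hr hm t (t*(2*m+5)+1+m) ht rfl v a ha h3
  have h5 : ∀ jj : Fin (pd r m (t*(2*m+5)+1+m+1+1+1)),
      (net r m).pre absAct (t*(2*m+5)+1+m+1+1) v jj
        = bndF 1 (fun k => mulA m (a (2*k)) (a (2*k+1))) (2^(qr r - t - 1)) ↑jj := by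
    intro jj
    rw [stepG t (m+2) (t*(2*m+5)+1+m+1) ht le_rfl (by omega) (by omega) v _ h4 jj]
    unfold bndF
    split_ifs
    · exact abs_one
    · rfl
    · exact abs_zero
  have hG : ∀ n, n ≤ m+2 → ∀ jj : Fin (pd r m (t*(2*m+5)+1+m+1+1+n+1)),
      (net r m).pre absAct (t*(2*m+5)+1+m+1+1+n) v jj
        = bndF 1 (fun k => mulA m (a (2*k)) (a (2*k+1))) (2^(qr r - t - 1)) ↑jj := by
    intro n
    induction n with
    | zero => intro _; exact h5
    | succ n ih =>
        intro hn jj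
        show NN.pre absAct (net r m) (t*(2*m+5)+1+m+1+1+n+1) v jj = _
        rw [stepG t (m+3+n) (t*(2*m+5)+1+m+1+1+n) ht (by omega) (by omega) (by omega) v _
          (ih (by omega)) jj]
        unfold bndF
        split_ifs
        · exact abs_one
        · exact abs_of_nonneg (abs_nonneg _)
        · exact abs_zero
  have hfin := hG (m+2) le_rfl
  rw [show (t+1)*(2*m+5) = t*(2*m+5)+1+m+1+1+(m+2) from by ring,
      show qr r - (t+1) = qr r - t - 1 from by omega]
  exact hfin

lemma layer0 (hr : 2 ≤ r) (hm : 1 ≤ m) (x : Fin r → ℝ)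
    (v : Fin (pd r m 0) → ℝ)
    (hv : ∀ kk : Fin (pd r m 0), v kk = (if (↑kk:ℕ) = 0 then 1 else Xf r x ((↑kk:ℕ)-1))) :
    ∀ jj : Fin (pd r m 1),
      (net r m).pre absAct 0 v jj = bndF 1 (Xf r x) (2^(qr r)) ↑jj := by
  intro jj
  rw [pre_zero_step r m v (fun j => if j = 0 then 1 else Xf r x (j-1)) hv jj]
  have hLL : LLd r m = (2*m+5)*(qr r)+1 := rfl
  have hq := qr_pos hr
  have hjj : ↑jj < NWd r :=
    lt_of_lt_of_le jj.isLt (le_of_eq (pd_eq 1 le_rfl (by omega)))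
  have hQ2 := Qr_two hr
  have hNW : NWd r = 4*Qr r + 1 := rfl
  have hrQ : r ≤ Qr r := r_le_Qr
  have hQq : Qr r = 2^(qr r) := rfl
  rw [show rows r m 0 ↑jj
      = (if (↑jj:ℕ) = 0 then [((0:ℕ),(1:ℝ))] else if (↑jj:ℕ) < 1 + r then [((↑jj:ℕ), (1:ℝ))]
         else if (↑jj:ℕ) < 1 + Qr r then [((0:ℕ),(1:ℝ))] else []) from rfl]
  by_cases h0 : (↑jj:ℕ) = 0
  · rw [if_pos h0, h0, bndF_zero rfl]
    simp only [List.map_cons, List.map_nil, List.sum_cons, List.sum_nil, add_zero]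
    rw [if_pos (by omega)]
    norm_num
  · rw [if_neg h0]
    by_cases h1 : (↑jj:ℕ) < 1 + r
    · rw [if_pos h1]
      simp only [List.map_cons, List.map_nil, List.sum_cons, List.sum_nil, add_zero]
      rw [if_pos (by omega), if_neg h0, bndF_at ↑jj ((↑jj:ℕ)-1) (by omega) (by omega)]
      ring
    · rw [if_neg h1]
      by_cases h2 : (↑jj:ℕ) < 1 + Qr r
      · rw [if_pos (by omega)]
        simp only [List.map_cons, List.map_nil, List.sum_cons, List.sum_nil, add_zero]
        rw [if_pos (by omega), bndF_at ↑jj ((↑jj:ℕ)-1) (by omega) (by omega)]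
        norm_num
        unfold Xf
        rw [dif_neg (by omega)]
      · rw [if_neg (by omega)]
        rw [bndF_none _ (by omega) (by omega)]
        simp

lemma boundary_inv (hr : 2 ≤ r) (hm : 1 ≤ m) (x : Fin r → ℝ)
    (hx : ∀ i, x i ∈ Set.Icc (0:ℝ) 1)
    (v : Fin (pd r m 0) → ℝ)
    (hv : ∀ kk : Fin (pd r m 0), v kk = (if (↑kk:ℕ) = 0 then 1 else Xf r x ((↑kk:ℕ)-1))) :
    ∀ t, t ≤ qr r → ∀ jj : Fin (pd r m (t*(2*m+5)+1)),
      (net r m).pre absAct (t*(2*m+5)) v jj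
        = bndF 1 (Aseq m (Xf r x) t) (2^(qr r - t)) ↑jj := by
  have hX := Xf_mem hx
  have hA := Aseq_mem (m := m) hX
  intro t
  induction t with
  | zero =>
      intro _
      have h00 : (0:ℕ)*(2*m+5) = 0 := zero_mul _
      rw [h00, Nat.sub_zero]
      exact layer0 hr hm x v hv
  | succ t ih =>
      intro ht
      exact stage_step hr hm t (by omega) v (Aseq m (Xf r x) t) (hA t) (ih (by omega))

lemma readout (hr : 2 ≤ r) (hm : 1 ≤ m) (x : Fin r → ℝ)
    (hx : ∀ i, x i ∈ Set.Icc (0:ℝ) 1)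
    (v : Fin (pd r m 0) → ℝ)
    (hv : ∀ kk : Fin (pd r m 0), v kk = (if (↑kk:ℕ) = 0 then 1 else Xf r x ((↑kk:ℕ)-1)))
    (i : ℕ) (hi : i = LLd r m) :
    ∀ jj : Fin (pd r m (i + 1)),
      (net r m).pre absAct i v jj = Aseq m (Xf r x) (qr r) 0 := by
  have hi2 : i = qr r*(2*m+5)+1 := by rw [hi]; unfold LLd; ring
  subst hi2
  have hA := Aseq_mem (m := m) (Xf_mem hx)
  have hb := boundary_inv hr hm x hx v hv (qr r) le_rfl
  intro jj
  rw [pre_step r m v (qr r*(2*m+5)) (by omega) _ hb jj]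
  have hrow : rows r m (qr r*(2*m+5)+1) ↑jj = [((1:ℕ),(1:ℝ))] := by
    generalize (↑jj : ℕ) = J
    rw [hi]
    simp only [rows]
    rw [if_neg (show ¬ (LLd r m = 0) from by unfold LLd; omega)]
    simp
  rw [hrow]
  simp only [List.map_cons, List.map_nil, List.sum_cons, List.sum_nil, add_zero]
  have hNW : NWd r = 4*Qr r + 1 := rfl
  have hQ1 : 1 ≤ Qr r := Qr_pos
  rw [if_pos (by omega), bndF_at 1 0 rfl (Nat.two_pow_pos _), one_mul,
    abs_of_nonneg (hA (qr r) 0).1]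

/-! ## approximation error -/

lemma mul_err {A B PA PB : ℝ} (hA : A ∈ Set.Icc (0:ℝ) 1) (hPB : PB ∈ Set.Icc (0:ℝ) 1) :
    |A*B - PA*PB| ≤ |A - PA| + |B - PB| := by
  have hid : A*B - PA*PB = (A - PA)*PB + A*(B - PB) := by ring
  rw [hid]
  refine le_trans (abs_add_le _ _) (add_le_add ?_ ?_)
  · rw [abs_mul]
    calc |A - PA| * |PB| ≤ |A - PA| * 1 := by
          refine mul_le_mul_of_nonneg_left ?_ (abs_nonneg _)
          rw [abs_of_nonneg hPB.1]; exact hPB.2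
      _ = |A - PA| := mul_one _
  · rw [abs_mul]
    calc |A| * |B - PB| ≤ 1 * |B - PB| := by
          refine mul_le_mul_of_nonneg_right ?_ (abs_nonneg _)
          rw [abs_of_nonneg hA.1]; exact hA.2
      _ = |B - PB| := one_mul _

lemma prod_mem {X : ℕ → ℝ} (hX : ∀ i, X i ∈ Set.Icc (0:ℝ) 1) (n s : ℕ) :
    (∏ j ∈ Finset.range n, X (s+j)) ∈ Set.Icc (0:ℝ) 1 :=
  ⟨Finset.prod_nonneg (fun i _ => (hX _).1),
   Finset.prod_le_one (fun i _ => (hX _).1) (fun i _ => (hX _).2)⟩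

lemma approx_err {m : ℕ} {X : ℕ → ℝ} (hX : ∀ i, X i ∈ Set.Icc (0:ℝ) 1) :
    ∀ t k, |Aseq m X t k - ∏ j ∈ Finset.range (2^t), X (2^t*k + j)|
      ≤ ((2:ℝ)^t - 1) * (((4:ℝ)^m)⁻¹/2) := by
  intro t
  induction t with
  | zero =>
      intro k
      simp only [pow_zero, Finset.range_one, Finset.prod_singleton, one_mul, add_zero]
      show |Aseq m X 0 k - X k| ≤ _
      show |X k - X k| ≤ _
      simp
  | succ t ih =>
      intro k
      have hA := Aseq_mem (m := m) hX
      have hsplit : (∏ j ∈ Finset.range (2^(t+1)), X (2^(t+1)*k + j))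
          = (∏ j ∈ Finset.range (2^t), X (2^t*(2*k) + j))
            * (∏ j ∈ Finset.range (2^t), X (2^t*(2*k+1) + j)) := by
        rw [show (2:ℕ)^(t+1) = 2^t + 2^t from by rw [pow_succ]; ring, Finset.prod_range_add]
        congr 1
        · exact Finset.prod_congr rfl (fun j _ => by
            rw [show (2^t+2^t)*k+j = 2^t*(2*k)+j from by ring])
        · exact Finset.prod_congr rfl (fun j _ => by
            rw [show (2^t+2^t)*k+(2^t+j) = 2^t*(2*k+1)+j from by ring])
      rw [show Aseq m X (t+1) k = mulA m (Aseq m X t (2*k)) (Aseq m X t (2*k+1)) from rfl,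
        hsplit]
      have h1 := mulA_close m (hA t (2*k)) (hA t (2*k+1))
      have h2 := mul_err (A := Aseq m X t (2*k)) (B := Aseq m X t (2*k+1))
        (PA := ∏ j ∈ Finset.range (2^t), X (2^t*(2*k) + j))
        (PB := ∏ j ∈ Finset.range (2^t), X (2^t*(2*k+1) + j))
        (hA t (2*k)) (prod_mem hX _ _)
      have h3 := ih (2*k); have h4 := ih (2*k+1)
      have htri := abs_sub_le
        (mulA m (Aseq m X t (2*k)) (Aseq m X t (2*k+1)))
        (Aseq m X t (2*k) * Aseq m X t (2*k+1))
        ((∏ j ∈ Finset.range (2^t), X (2^t*(2*k) + j))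
          * (∏ j ∈ Finset.range (2^t), X (2^t*(2*k+1) + j)))
      have hpow : (0:ℝ) ≤ ((4:ℝ)^m)⁻¹ := by positivity
      have h2t : (1:ℝ) ≤ (2:ℝ)^t := one_le_pow₀ (by norm_num)
      calc |mulA m (Aseq m X t (2*k)) (Aseq m X t (2*k+1))
            - (∏ j ∈ Finset.range (2^t), X (2^t*(2*k) + j))
              * (∏ j ∈ Finset.range (2^t), X (2^t*(2*k+1) + j))| ≤ _ := htri
        _ ≤ (((4:ℝ)^m)⁻¹/2) + (((2:ℝ)^t - 1) * (((4:ℝ)^m)⁻¹/2)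
              + ((2:ℝ)^t - 1) * (((4:ℝ)^m)⁻¹/2)) :=
            add_le_add h1 (le_trans h2 (add_le_add h3 h4))
        _ ≤ ((2:ℝ)^(t+1) - 1) * (((4:ℝ)^m)⁻¹/2) := by
            rw [pow_succ]
            nlinarith
end stage4

/-! ## absProd bounds -/

def βsF (M : ℝ) (e : ℕ) : ℕ → ℕ → ℝ := fun b _ =>
  if b ≤ 1 then M else if b ≤ 3 then (2 - ((2:ℝ)^e)⁻¹) * M else (2 - 4*((2:ℝ)^e)⁻¹) * M

section bnd
variable {r m : ℕ}

lemma habs12 : |(1:ℝ)/2| = 1/2 := abs_of_nonneg (by norm_num)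
lemma habsm1 : |(-1:ℝ)| = 1 := by rw [abs_neg, abs_one]
lemma habsm12 : |(-(1/2):ℝ)| = 1/2 := by rw [abs_neg]; exact abs_of_nonneg (by norm_num)

lemma inv2e (e : ℕ) (he : 1 ≤ e) : 0 < ((2:ℝ)^e)⁻¹ ∧ ((2:ℝ)^e)⁻¹ ≤ 1/2 := by
  constructor
  · positivity
  · rw [show (1:ℝ)/2 = ((2:ℝ)^1)⁻¹ from by norm_num]
    apply inv_anti₀ (by norm_num)
    exact pow_le_pow_right₀ (by norm_num) he

lemma βsF_nonneg (M : ℝ) (hM : 0 ≤ M) (e : ℕ) (he : 1 ≤ e) (b k : ℕ) :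
    0 ≤ βsF M e b k := by
  have h := inv2e e he
  unfold βsF
  split_ifs <;> nlinarith

lemma pairF_bnd_nonneg (M : ℝ) (hM : 0 ≤ M) (e : ℕ) (he : 1 ≤ e) (P : ℕ) (j : ℕ) :
    0 ≤ pairF r M (βsF M e) P j := by
  unfold pairF
  split_ifs
  · exact hM
  · exact βsF_nonneg M hM e he _ _
  · exact le_refl 0

lemma βsF_0 (M : ℝ) (e k : ℕ) : βsF M e 0 k = M := rfl
lemma βsF_1 (M : ℝ) (e k : ℕ) : βsF M e 1 k = M := rfl
lemma βsF_2 (M : ℝ) (e k : ℕ) : βsF M e 2 k = (2 - ((2:ℝ)^e)⁻¹) * M := rfl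
lemma βsF_3 (M : ℝ) (e k : ℕ) : βsF M e 3 k = (2 - ((2:ℝ)^e)⁻¹) * M := rfl
lemma βsF_4 (M : ℝ) (e k : ℕ) : βsF M e 4 k = (2 - 4*((2:ℝ)^e)⁻¹) * M := rfl
lemma βsF_5 (M : ℝ) (e k : ℕ) : βsF M e 5 k = (2 - 4*((2:ℝ)^e)⁻¹) * M := rfl

lemma bndA (hr : 2 ≤ r) (hm : 1 ≤ m) (t i : ℕ) (ht : t < qr r) (hi : i = t*(2*m+5))
    (M : ℝ) (hM : 0 ≤ M)
    (hF : ∀ (ll : Fin (pd r m (i+1))) (kk : Fin (pd r m 0)),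
        (net r m).absProd i ll kk ≤ M) :
    ∀ (jj : Fin (pd r m (i+1+1))) (kk : Fin (pd r m 0)),
      (net r m).absProd (i+1) jj kk ≤ pairF r M (βsF M 1) (2^(qr r - t - 1)) ↑jj := by
  intro jj kk
  have hLL : LLd r m = (2*m+5)*(qr r)+1 := rfl
  have hts : t*(2*m+5) + (2*m+5) ≤ (2*m+5)*(qr r) := by
    have : (t+1)*(2*m+5) ≤ (qr r)*(2*m+5) := Nat.mul_le_mul_right _ (by omega)
    nlinarith
  have hQ2 := Qr_two hr
  have hNW : NWd r = 4 * Qr r + 1 := rfl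
  have hPle : 2^(qr r - t - 1) ≤ 2^(qr r - 1) := Nat.pow_le_pow_right (by omega) (by omega)
  have h12 := inv2e 1 le_rfl
  refine le_trans (bnd_step r m i (by omega) (fun _ => M) (fun _ => hM) hF jj kk) ?_
  rw [rows_stage t 1 (i+1) ↑jj ht (by omega) (by omega) (by omega)]
  have hjj : ↑jj < NWd r :=
    lt_of_lt_of_le jj.isLt (le_of_eq (pd_eq (i+1+1) (by omega) (by omega)))
  rcases slot_cases hr ↑jj hjj with h0 | ⟨h1, h2⟩ | ⟨k, b, hb, hpb, hk⟩
  · rw [h0, pairF_zero rfl]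
    rw [stageRows, if_neg (by omega), if_pos rfl]
    simp only [List.map_cons, List.map_nil, List.sum_cons, List.sum_nil, add_zero,
          abs_one, habs12, habsm1, habsm12]
    norm_num
  · rw [stageRows, if_neg (by omega), if_neg (by omega), if_neg (by omega),
      if_neg (by omega)]
    rw [pairF_none _ (by omega) (by omega)]
    simp
  · have hpbs : pbs r k b = 1 + Qr r + 6*k + b := rfl
    by_cases hkP : k < 2^(qr r - t - 1)
    · rw [stageRows, if_neg (by omega), if_neg (by omega), if_neg (by omega), if_pos (by omega)]
      rw [show (↑jj - (1 + Qr r)) / 6 = k from by omega,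
          show (↑jj - (1 + Qr r)) % 6 = b from by omega]
      rw [pairF_at ↑jj k b hpb hkP hb]
      interval_cases b
      · rw [stagePairRows, if_pos rfl, if_pos rfl, βsF_0]
        simp only [List.map_cons, List.map_nil, List.sum_cons, List.sum_nil, add_zero,
          abs_one, habs12, habsm1, habsm12]
        linarith
      · rw [stagePairRows, if_pos rfl, if_neg (by omega), if_pos rfl, βsF_1]
        simp only [List.map_cons, List.map_nil, List.sum_cons, List.sum_nil, add_zero,
          abs_one, habs12, habsm1, habsm12]
        linarith
      · rw [stagePairRows, if_pos rfl, if_neg (by omega), if_neg (by omega), βsF_2]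
        simp only [List.map_nil, List.sum_nil]
        nlinarith [h12.1, h12.2]
      · rw [stagePairRows, if_pos rfl, if_neg (by omega), if_neg (by omega), βsF_3]
        simp only [List.map_nil, List.sum_nil]
        nlinarith [h12.1, h12.2]
      · rw [stagePairRows, if_pos rfl, if_neg (by omega), if_neg (by omega), βsF_4]
        simp only [List.map_nil, List.sum_nil]
        nlinarith [h12.1, h12.2]
      · rw [stagePairRows, if_pos rfl, if_neg (by omega), if_neg (by omega), βsF_5]
        simp only [List.map_nil, List.sum_nil]
        nlinarith [h12.1, h12.2]
    · rw [stageRows, if_neg (by omega), if_neg (by omega), if_neg (by omega), if_neg (by omega)]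
      rw [pairF_none _ (by omega) (by omega)]
      simp

lemma bndB (hr : 2 ≤ r) (hm : 1 ≤ m) (t i : ℕ) (ht : t < qr r) (hi : i = t*(2*m+5)+1)
    (M : ℝ) (hM : 0 ≤ M)
    (hF : ∀ (ll : Fin (pd r m (i+1))) (kk : Fin (pd r m 0)),
        (net r m).absProd i ll kk ≤ pairF r M (βsF M 1) (2^(qr r - t - 1)) ↑ll) :
    ∀ (jj : Fin (pd r m (i+1+1))) (kk : Fin (pd r m 0)),
      (net r m).absProd (i+1) jj kk ≤ pairF r M (βsF M 1) (2^(qr r - t - 1)) ↑jj := by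
  intro jj kk
  have hLL : LLd r m = (2*m+5)*(qr r)+1 := rfl
  have hts : t*(2*m+5) + (2*m+5) ≤ (2*m+5)*(qr r) := by
    have : (t+1)*(2*m+5) ≤ (qr r)*(2*m+5) := Nat.mul_le_mul_right _ (by omega)
    nlinarith
  have hQ2 := Qr_two hr
  have hNW : NWd r = 4 * Qr r + 1 := rfl
  have hPle : 2^(qr r - t - 1) ≤ 2^(qr r - 1) := Nat.pow_le_pow_right (by omega) (by omega)
  have h12 := inv2e 1 le_rfl
  refine le_trans (bnd_step r m i (by omega) _
    (pairF_bnd_nonneg M hM 1 le_rfl _) (fun ll kk => hF ll kk) jj kk) ?_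
  rw [rows_stage t 2 (i+1) ↑jj ht (by omega) (by omega) (by omega)]
  have hjj : ↑jj < NWd r :=
    lt_of_lt_of_le jj.isLt (le_of_eq (pd_eq (i+1+1) (by omega) (by omega)))
  rcases slot_cases hr ↑jj hjj with h0 | ⟨h1, h2⟩ | ⟨k, b, hb, hpb, hk⟩
  · rw [h0, pairF_zero rfl]
    rw [stageRows, if_neg (by omega), if_pos rfl]
    simp only [List.map_cons, List.map_nil, List.sum_cons, List.sum_nil, add_zero,
          abs_one, habs12, habsm1, habsm12]
    rw [pairF_zero rfl]
    norm_num
  · rw [stageRows, if_neg (by omega), if_neg (by omega), if_neg (by omega),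
      if_neg (by omega)]
    rw [pairF_none _ (by omega) (by omega)]
    simp
  · have hpbs : pbs r k b = 1 + Qr r + 6*k + b := rfl
    have hpbs0 : pbs r k 0 = 1 + Qr r + 6*k + 0 := rfl
    have hpbs1 : pbs r k 1 = 1 + Qr r + 6*k + 1 := rfl
    by_cases hkP : k < 2^(qr r - t - 1)
    · rw [stageRows, if_neg (by omega), if_neg (by omega), if_neg (by omega), if_pos (by omega)]
      rw [show (↑jj - (1 + Qr r)) / 6 = k from by omega,
          show (↑jj - (1 + Qr r)) % 6 = b from by omega]
      rw [pairF_at ↑jj k b hpb hkP hb]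
      have hu0 : pairF r M (βsF M 1) (2^(qr r-t-1)) (pbs r k 0) = M := by
        rw [pairF_at _ k 0 rfl hkP (by omega), βsF_0]
      have hu1 : pairF r M (βsF M 1) (2^(qr r-t-1)) (pbs r k 1) = M := by
        rw [pairF_at _ k 1 rfl hkP (by omega), βsF_1]
      interval_cases b
      · rw [stagePairRows, if_neg (by omega), if_pos rfl, if_pos rfl, βsF_0]
        simp only [List.map_cons, List.map_nil, List.sum_cons, List.sum_nil, add_zero,
          abs_one, habs12, habsm1, habsm12]
        rw [hu0]
        linarith
      · rw [stagePairRows, if_neg (by omega), if_pos rfl, if_neg (by omega), if_pos rfl, βsF_1]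
        simp only [List.map_cons, List.map_nil, List.sum_cons, List.sum_nil, add_zero,
          abs_one, habs12, habsm1, habsm12]
        rw [hu1]
        linarith
      · rw [stagePairRows, if_neg (by omega), if_pos rfl, if_neg (by omega), if_neg (by omega),
          if_pos rfl, βsF_2]
        simp only [List.map_cons, List.map_nil, List.sum_cons, List.sum_nil, add_zero,
          abs_one, habs12, habsm1, habsm12]
        rw [hu0, pairF_zero rfl]
        have := inv2e 1 le_rfl
        nlinarith [this.1, this.2]
      · rw [stagePairRows, if_neg (by omega), if_pos rfl, if_neg (by omega), if_neg (by omega),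
          if_neg (by omega), if_pos rfl, βsF_3]
        simp only [List.map_cons, List.map_nil, List.sum_cons, List.sum_nil, add_zero,
          abs_one, habs12, habsm1, habsm12]
        rw [hu1, pairF_zero rfl]
        have := inv2e 1 le_rfl
        nlinarith [this.1, this.2]
      · rw [stagePairRows, if_neg (by omega), if_pos rfl, if_neg (by omega), if_neg (by omega),
          if_neg (by omega), if_neg (by omega), βsF_4]
        simp only [List.map_nil, List.sum_nil]
        nlinarith [h12.1, h12.2]
      · rw [stagePairRows, if_neg (by omega), if_pos rfl, if_neg (by omega), if_neg (by omega),
          if_neg (by omega), if_neg (by omega), βsF_5]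
        simp only [List.map_nil, List.sum_nil]
        nlinarith [h12.1, h12.2]
    · rw [stageRows, if_neg (by omega), if_neg (by omega), if_neg (by omega), if_neg (by omega)]
      rw [pairF_none _ (by omega) (by omega)]
      simp
end bnd

section bnd2
variable {r m : ℕ}

lemma bndC (hr : 2 ≤ r) (hm : 1 ≤ m) (t e i : ℕ) (ht : t < qr r)
    (he1 : 1 ≤ e) (he2 : e + 1 ≤ m) (hi : i = t*(2*m+5)+1+e)
    (M : ℝ) (hM : 0 ≤ M)
    (hF : ∀ (ll : Fin (pd r m (i+1))) (kk : Fin (pd r m 0)),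
        (net r m).absProd i ll kk ≤ pairF r M (βsF M e) (2^(qr r - t - 1)) ↑ll) :
    ∀ (jj : Fin (pd r m (i+1+1))) (kk : Fin (pd r m 0)),
      (net r m).absProd (i+1) jj kk ≤ pairF r M (βsF M (e+1)) (2^(qr r - t - 1)) ↑jj := by
  intro jj kk
  have hLL : LLd r m = (2*m+5)*(qr r)+1 := rfl
  have hts : t*(2*m+5) + (2*m+5) ≤ (2*m+5)*(qr r) := by
    have : (t+1)*(2*m+5) ≤ (qr r)*(2*m+5) := Nat.mul_le_mul_right _ (by omega)
    nlinarith
  have hQ2 := Qr_two hr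
  have hNW : NWd r = 4 * Qr r + 1 := rfl
  have hPle : 2^(qr r - t - 1) ≤ 2^(qr r - 1) := Nat.pow_le_pow_right (by omega) (by omega)
  have hce := inv2e e he1
  have hce1 := inv2e (e+1) (by omega)
  have hc2 : ((2:ℝ)^(e+1))⁻¹ = ((2:ℝ)^e)⁻¹/2 := by
    rw [pow_succ, mul_inv]
    ring
  refine le_trans (bnd_step r m i (by omega) _
    (pairF_bnd_nonneg M hM e he1 _) (fun ll kk => hF ll kk) jj kk) ?_
  rw [rows_stage t (e+2) (i+1) ↑jj ht (by omega) (by omega) (by omega)]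
  have hjj : ↑jj < NWd r :=
    lt_of_lt_of_le jj.isLt (le_of_eq (pd_eq (i+1+1) (by omega) (by omega)))
  rcases slot_cases hr ↑jj hjj with h0 | ⟨h1, h2⟩ | ⟨k, b, hb, hpb, hk⟩
  · rw [h0, pairF_zero rfl]
    rw [stageRows, if_neg (by omega), if_pos rfl]
    simp only [List.map_cons, List.map_nil, List.sum_cons, List.sum_nil, add_zero, abs_one]
    rw [pairF_zero rfl]
    linarith
  · rw [stageRows, if_neg (by omega), if_neg (by omega), if_neg (by omega),
      if_neg (by omega)]
    rw [pairF_none _ (by omega) (by omega)]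
    simp
  · have hpbs : pbs r k b = 1 + Qr r + 6*k + b := rfl
    have hpbs0 : pbs r k 0 = 1 + Qr r + 6*k + 0 := rfl
    have hpbs1 : pbs r k 1 = 1 + Qr r + 6*k + 1 := rfl
    have hpbs2 : pbs r k 2 = 1 + Qr r + 6*k + 2 := rfl
    have hpbs3 : pbs r k 3 = 1 + Qr r + 6*k + 3 := rfl
    have hpbs4 : pbs r k 4 = 1 + Qr r + 6*k + 4 := rfl
    have hpbs5 : pbs r k 5 = 1 + Qr r + 6*k + 5 := rfl
    by_cases hkP : k < 2^(qr r - t - 1)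
    · rw [stageRows, if_neg (by omega), if_neg (by omega), if_neg (by omega), if_pos (by omega)]
      rw [show (↑jj - (1 + Qr r)) / 6 = k from by omega,
          show (↑jj - (1 + Qr r)) % 6 = b from by omega]
      rw [pairF_at ↑jj k b hpb hkP hb]
      have hu0 : pairF r M (βsF M e) (2^(qr r-t-1)) (pbs r k 0) = M := by
        rw [pairF_at _ k 0 rfl hkP (by omega), βsF_0]
      have hu1 : pairF r M (βsF M e) (2^(qr r-t-1)) (pbs r k 1) = M := by
        rw [pairF_at _ k 1 rfl hkP (by omega), βsF_1]
      have hu2 : pairF r M (βsF M e) (2^(qr r-t-1)) (pbs r k 2)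
          = (2 - ((2:ℝ)^e)⁻¹) * M := by
        rw [pairF_at _ k 2 rfl hkP (by omega), βsF_2]
      have hu3 : pairF r M (βsF M e) (2^(qr r-t-1)) (pbs r k 3)
          = (2 - ((2:ℝ)^e)⁻¹) * M := by
        rw [pairF_at _ k 3 rfl hkP (by omega), βsF_3]
      have hu4 : pairF r M (βsF M e) (2^(qr r-t-1)) (pbs r k 4)
          = (2 - 4*((2:ℝ)^e)⁻¹) * M := by
        rw [pairF_at _ k 4 rfl hkP (by omega), βsF_4]
      have hu5 : pairF r M (βsF M e) (2^(qr r-t-1)) (pbs r k 5)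
          = (2 - 4*((2:ℝ)^e)⁻¹) * M := by
        rw [pairF_at _ k 5 rfl hkP (by omega), βsF_5]
      interval_cases b
      · rw [stagePairRows, if_neg (by omega), if_neg (by omega), if_pos rfl, βsF_0]
        simp only [List.map_cons, List.map_nil, List.sum_cons, List.sum_nil, add_zero, abs_one]
        rw [hu0]
        linarith
      · rw [stagePairRows, if_neg (by omega), if_neg (by omega), if_neg (by omega), if_pos rfl,
          βsF_1]
        simp only [List.map_cons, List.map_nil, List.sum_cons, List.sum_nil, add_zero, abs_one]
        rw [hu1]
        linarith
      · rw [stagePairRows, if_neg (by omega), if_neg (by omega), if_neg (by omega),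
          if_neg (by omega), if_pos rfl, βsF_2, show e+2-1 = e+1 from rfl]
        simp only [List.map_cons, List.map_nil, List.sum_cons, List.sum_nil, add_zero,
          abs_one, habsm1]
        rw [pairF_zero rfl, hu2, abs_of_nonneg (by positivity : (0:ℝ) ≤ ((2:ℝ)^(e+1))⁻¹), hc2]
        apply le_of_eq
        ring
      · rw [stagePairRows, if_neg (by omega), if_neg (by omega), if_neg (by omega),
          if_neg (by omega), if_neg (by omega), if_pos rfl, βsF_3, show e+2-1 = e+1 from rfl]
        simp only [List.map_cons, List.map_nil, List.sum_cons, List.sum_nil, add_zero,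
          abs_one, habsm1]
        rw [pairF_zero rfl, hu3, abs_of_nonneg (by positivity : (0:ℝ) ≤ ((2:ℝ)^(e+1))⁻¹), hc2]
        apply le_of_eq
        ring
      · rw [stagePairRows, if_neg (by omega), if_neg (by omega), if_neg (by omega),
          if_neg (by omega), if_neg (by omega), if_neg (by omega), if_pos rfl, βsF_4,
          show e+2-2 = e from rfl]
        simp only [List.map_cons, List.map_nil, List.sum_cons, List.sum_nil, add_zero,
          abs_one, habsm1]
        rw [pairF_zero rfl, hu4, hu2, abs_of_nonneg (by positivity : (0:ℝ) ≤ ((4:ℝ)^e)⁻¹),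
          abs_of_nonpos (neg_nonpos.mpr (le_of_lt hce.1)), hc2, four_pow_eq]
        apply le_of_eq
        ring
      · rw [stagePairRows, if_neg (by omega), if_neg (by omega), if_neg (by omega),
          if_neg (by omega), if_neg (by omega), if_neg (by omega), if_neg (by omega), βsF_5,
          show e+2-2 = e from rfl]
        simp only [List.map_cons, List.map_nil, List.sum_cons, List.sum_nil, add_zero,
          abs_one, habsm1]
        rw [pairF_zero rfl, hu5, hu3, abs_of_nonneg (by positivity : (0:ℝ) ≤ ((4:ℝ)^e)⁻¹),
          abs_of_nonpos (neg_nonpos.mpr (le_of_lt hce.1)), hc2, four_pow_eq]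
        apply le_of_eq
        ring
    · rw [stageRows, if_neg (by omega), if_neg (by omega), if_neg (by omega), if_neg (by omega)]
      rw [pairF_none _ (by omega) (by omega)]
      simp
end bnd2

section bnd3
variable {r m : ℕ}

lemma bndD (hr : 2 ≤ r) (hm : 1 ≤ m) (t i : ℕ) (ht : t < qr r)
    (hi : i = t*(2*m+5)+1+m)
    (M : ℝ) (hM : 0 ≤ M)
    (hF : ∀ (ll : Fin (pd r m (i+1))) (kk : Fin (pd r m 0)),
        (net r m).absProd i ll kk ≤ pairF r M (βsF M m) (2^(qr r - t - 1)) ↑ll) :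
    ∀ (jj : Fin (pd r m (i+1+1))) (kk : Fin (pd r m 0)),
      (net r m).absProd (i+1) jj kk ≤ bndF M (fun _ => 6*M) (2^(qr r - t - 1)) ↑jj := by
  intro jj kk
  have hLL : LLd r m = (2*m+5)*(qr r)+1 := rfl
  have hts : t*(2*m+5) + (2*m+5) ≤ (2*m+5)*(qr r) := by
    have : (t+1)*(2*m+5) ≤ (qr r)*(2*m+5) := Nat.mul_le_mul_right _ (by omega)
    nlinarith
  have hQ2 := Qr_two hr
  have hNW : NWd r = 4 * Qr r + 1 := rfl
  have hPle : 2^(qr r - t - 1) ≤ 2^(qr r - 1) := Nat.pow_le_pow_right (by omega) (by omega)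
  have hcm := inv2e m hm
  refine le_trans (bnd_step r m i (by omega) _
    (pairF_bnd_nonneg M hM m hm _) (fun ll kk => hF ll kk) jj kk) ?_
  rw [rows_stage t (m+2) (i+1) ↑jj ht (by omega) (by omega) (by omega)]
  have hjj : ↑jj < NWd r :=
    lt_of_lt_of_le jj.isLt (le_of_eq (pd_eq (i+1+1) (by omega) (by omega)))
  rcases slot_cases hr ↑jj hjj with h0 | ⟨h1, h2⟩ | ⟨k, b, hb, hpb, hk⟩
  · rw [h0, bndF_zero rfl]
    rw [stageRows, if_neg (by omega), if_pos rfl]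
    simp only [List.map_cons, List.map_nil, List.sum_cons, List.sum_nil, add_zero, abs_one]
    rw [pairF_zero rfl]
    linarith
  · by_cases hjP : (↑jj : ℕ) < 1 + 2^(qr r - t - 1)
    · have hk' : (↑jj : ℕ) - 1 < 2^(qr r - t - 1) := by omega
      generalize hkg : (↑jj : ℕ) - 1 = k at hk'
      have hjk : (↑jj : ℕ) = 1 + k := by omega
      have hpbs0 : pbs r k 0 = 1 + Qr r + 6*k + 0 := rfl
      have hpbs1 : pbs r k 1 = 1 + Qr r + 6*k + 1 := rfl
      have hpbs2 : pbs r k 2 = 1 + Qr r + 6*k + 2 := rfl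
      have hpbs3 : pbs r k 3 = 1 + Qr r + 6*k + 3 := rfl
      have hpbs4 : pbs r k 4 = 1 + Qr r + 6*k + 4 := rfl
      have hpbs5 : pbs r k 5 = 1 + Qr r + 6*k + 5 := rfl
      rw [stageRows, if_neg (by omega), if_neg (by omega), if_pos rfl, if_pos hjP]
      rw [hkg]
      simp only [List.map_cons, List.map_nil, List.sum_cons, List.sum_nil, add_zero,
        abs_one, habsm1]
      rw [pairF_at _ k 0 rfl hk' (by omega), βsF_0,
          pairF_at _ k 1 rfl hk' (by omega), βsF_1,
          pairF_at _ k 4 rfl hk' (by omega), βsF_4,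
          pairF_at _ k 5 rfl hk' (by omega), βsF_5,
          pairF_at _ k 2 rfl hk' (by omega), βsF_2,
          pairF_at _ k 3 rfl hk' (by omega), βsF_3]
      rw [abs_of_nonneg (le_of_lt hcm.1), abs_of_nonpos (neg_nonpos.mpr (le_of_lt hcm.1))]
      rw [bndF_at ↑jj k hjk hk']
      nlinarith [hcm.1, hcm.2, mul_nonneg (le_of_lt hcm.1) hM,
        mul_nonneg (mul_nonneg (le_of_lt hcm.1) (le_of_lt hcm.1)) hM]
    · rw [stageRows, if_neg (by omega), if_neg (by omega), if_pos rfl, if_neg hjP]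
      rw [bndF_none _ (by omega) (by omega)]
      simp
  · have hpbs : pbs r k b = 1 + Qr r + 6*k + b := rfl
    rw [stageRows, if_neg (by omega), if_neg (by omega), if_pos rfl, if_neg (by omega)]
    rw [bndF_none _ (by omega) (by omega)]
    simp

lemma bndG (t ψ i : ℕ) (ht : t < qr r) (hψ1 : m+2 ≤ ψ) (hψ2 : ψ ≤ 2*m+4)
    (hi : i = t*(2*m+5)+ψ)
    (γ : ℕ → ℝ) (hγ : ∀ j, 0 ≤ γ j)
    (hF : ∀ (ll : Fin (pd r m (i+1))) (kk : Fin (pd r m 0)),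
        (net r m).absProd i ll kk ≤ γ ↑ll) :
    ∀ (jj : Fin (pd r m (i+1+1))) (kk : Fin (pd r m 0)),
      (net r m).absProd (i+1) jj kk ≤ γ ↑jj := by
  intro jj kk
  have hLL : LLd r m = (2*m+5)*(qr r)+1 := rfl
  have hts : t*(2*m+5) + (2*m+5) ≤ (2*m+5)*(qr r) := by
    have : (t+1)*(2*m+5) ≤ (qr r)*(2*m+5) := Nat.mul_le_mul_right _ (by omega)
    nlinarith
  refine le_trans (bnd_step r m i (by omega) γ hγ hF jj kk) ?_
  rw [rows_stage t (ψ+1) (i+1) ↑jj ht (by omega) (by omega) (by omega)]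
  rw [stageRows, if_pos (by omega)]
  simp only [List.map_cons, List.map_nil, List.sum_cons, List.sum_nil, add_zero, abs_one]
  linarith [hγ (↑jj : ℕ)]

lemma absProd0 : ∀ (jj : Fin (pd r m 1)) (kk : Fin (pd r m 0)),
    (net r m).absProd 0 jj kk ≤ 1 := by
  intro jj kk
  show |rowEval (rows r m 0 ↑jj) ↑kk| ≤ 1
  rw [show rows r m 0 ↑jj
      = (if (↑jj:ℕ) = 0 then [((0:ℕ),(1:ℝ))] else if (↑jj:ℕ) < 1 + r then [((↑jj:ℕ), (1:ℝ))]
         else if (↑jj:ℕ) < 1 + Qr r then [((0:ℕ),(1:ℝ))] else []) from rfl]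
  split_ifs <;> simp [rowEval] <;> split_ifs <;> norm_num

lemma stage_bnd (hr : 2 ≤ r) (hm : 1 ≤ m) (t : ℕ) (ht : t < qr r)
    (M : ℝ) (hM : 0 ≤ M)
    (hF : ∀ (ll : Fin (pd r m (t*(2*m+5)+1))) (kk : Fin (pd r m 0)),
        (net r m).absProd (t*(2*m+5)) ll kk ≤ M) :
    ∀ (jj : Fin (pd r m ((t+1)*(2*m+5)+1))) (kk : Fin (pd r m 0)),
      (net r m).absProd ((t+1)*(2*m+5)) jj kk ≤ 16*M := by
  have h1 := bndA hr hm t (t*(2*m+5)) ht rfl M hM hF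
  have h2 := bndB hr hm t (t*(2*m+5)+1) ht rfl M hM h1
  have hC : ∀ e, 1 ≤ e → e ≤ m → ∀ (jj : Fin (pd r m (t*(2*m+5)+1+e+1))) (kk : Fin (pd r m 0)),
      (net r m).absProd (t*(2*m+5)+1+e) jj kk ≤ pairF r M (βsF M e) (2^(qr r - t - 1)) ↑jj := by
    intro e he1
    induction e, he1 using Nat.le_induction with
    | base => intro _; exact h2
    | succ e he ih =>
        intro hem
        exact bndC hr hm t e (t*(2*m+5)+1+e) ht he (by omega) rfl M hM (ih (by omega))
  have h3 := hC m hm le_rfl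
  have h4 := bndD hr hm t (t*(2*m+5)+1+m) ht rfl M hM h3
  have hγ : ∀ j, 0 ≤ bndF M (fun _ => 6*M) (2^(qr r - t - 1)) j := by
    intro j
    unfold bndF
    split_ifs
    · exact hM
    · show (0:ℝ) ≤ 6*M
      nlinarith
    · exact le_refl 0
  have hG : ∀ n, n ≤ m+2 → ∀ (jj : Fin (pd r m (t*(2*m+5)+1+m+1+1+n+1))) (kk : Fin (pd r m 0)),
      (net r m).absProd (t*(2*m+5)+1+m+1+1+n) jj kk
        ≤ bndF M (fun _ => 6*M) (2^(qr r - t - 1)) ↑jj := by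
    intro n
    induction n with
    | zero =>
        intro _ jj kk
        exact bndG t (m+2) (t*(2*m+5)+1+m+1) ht le_rfl (by omega) (by omega) _ hγ h4 jj kk
    | succ n ih =>
        intro hn jj kk
        show (net r m).absProd (t*(2*m+5)+1+m+1+1+n+1) jj kk ≤ _
        exact bndG t (m+3+n) (t*(2*m+5)+1+m+1+1+n) ht (by omega) (by omega) (by omega) _ hγ
          (ih (by omega)) jj kk
  have hfin := hG (m+2) le_rfl
  rw [show (t+1)*(2*m+5) = t*(2*m+5)+1+m+1+1+(m+2) from by ring]
  intro jj kk
  refine le_trans (hfin jj kk) ?_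
  unfold bndF
  split_ifs
  · nlinarith
  · show 6*M ≤ 16*M
    nlinarith
  · nlinarith

lemma bnd_inv (hr : 2 ≤ r) (hm : 1 ≤ m) :
    ∀ t, t ≤ qr r → ∀ (jj : Fin (pd r m (t*(2*m+5)+1))) (kk : Fin (pd r m 0)),
      (net r m).absProd (t*(2*m+5)) jj kk ≤ 16^t := by
  intro t
  induction t with
  | zero =>
      intro _
      have h00 : (0:ℕ)*(2*m+5) = 0 := zero_mul _
      rw [h00]
      intro jj kk
      calc (net r m).absProd 0 jj kk ≤ 1 := absProd0 jj kk
        _ = 16^(0:ℕ) := by norm_num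
  | succ t ih =>
      intro ht jj kk
      have := stage_bnd hr hm t (by omega) (16^t) (by positivity) (ih (by omega)) jj kk
      calc (net r m).absProd ((t+1)*(2*m+5)) jj kk ≤ 16*16^t := this
        _ = 16^(t+1) := by rw [pow_succ]; ring

lemma bnd_final (hr : 2 ≤ r) (hm : 1 ≤ m) (i : ℕ) (hi : i = LLd r m) :
    ∀ (jj : Fin (pd r m (i+1))) (kk : Fin (pd r m 0)),
      (net r m).absProd i jj kk ≤ 16^(qr r) := by
  have hi2 : i = qr r*(2*m+5)+1 := by rw [hi]; unfold LLd; ring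
  subst hi2
  have hb := bnd_inv hr hm (qr r) le_rfl
  intro jj kk
  refine le_trans (bnd_step r m (qr r*(2*m+5)) (by omega) (fun _ => 16^(qr r))
    (fun _ => by positivity) hb jj kk) ?_
  have hrow : rows r m (qr r*(2*m+5)+1) ↑jj = [((1:ℕ),(1:ℝ))] := by
    generalize (↑jj : ℕ) = J
    rw [hi]
    simp only [rows]
    rw [if_neg (show ¬ (LLd r m = 0) from by unfold LLd; omega)]
    simp
  rw [hrow]
  simp only [List.map_cons, List.map_nil, List.sum_cons, List.sum_nil, add_zero, abs_one]
  norm_num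
end bnd3

section final
variable {r m : ℕ}

lemma input_desc (h0 : pd r m 0 = r+1) (x : Fin r → ℝ) :
    ∀ kk : Fin (pd r m 0), (Fin.cons (1:ℝ) x ∘ Fin.cast h0) kk
      = (if (↑kk:ℕ) = 0 then 1 else Xf r x ((↑kk:ℕ)-1)) := by
  intro kk
  simp only [Function.comp_apply]
  rcases Fin.eq_zero_or_eq_succ (Fin.cast h0 kk) with h | ⟨i, h⟩
  · have hk0 : (↑kk:ℕ) = 0 := by
      have := congrArg Fin.val h
      simpa using this
    rw [h, Fin.cons_zero, if_pos hk0]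
  · have hil := i.isLt
    have hki : (↑kk:ℕ) = ↑i + 1 := by
      have := congrArg Fin.val h
      simpa using this
    rw [h, Fin.cons_succ, if_neg (by omega)]
    unfold Xf
    rw [dif_pos (by omega : (↑kk:ℕ)-1 < r)]
    congr 1
    apply Fin.ext
    simp only []
    omega

lemma prod_eq (hr : 2 ≤ r) (x : Fin r → ℝ) :
    ∏ j ∈ Finset.range (2^(qr r)), Xf r x j = ∏ i : Fin r, x i := by
  have hrQ : r ≤ 2^(qr r) := r_le_Qr
  rw [show (2:ℕ)^(qr r) = r + (2^(qr r) - r) from by omega, Finset.prod_range_add]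
  have h2 : ∀ j ∈ Finset.range (2^(qr r) - r), Xf r x (r + j) = 1 := by
    intro j _
    unfold Xf
    rw [dif_neg (by omega)]
  rw [Finset.prod_congr rfl h2, Finset.prod_const_one, mul_one]
  rw [← Fin.prod_univ_eq_prod_range (fun j => Xf r x j) r]
  apply Finset.prod_congr rfl
  intro i _
  unfold Xf
  rw [dif_pos i.isLt]

end final
end Mult5

open Mult5 in
theorem exists_multr_network' (r m : ℕ) (hr : 2 ≤ r) (hm : 0 < m) :
    ∃ (p : ℕ → ℕ) (h0 : p 0 = r + 1) (_ : p ((2 * m + 5) * Nat.clog 2 r + 1 + 1) = 1)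
      (f : NN p),
      (∀ i ≤ (2 * m + 5) * Nat.clog 2 r + 1 + 1, p i ≤ 6 * r * (m + 2) + 1) ∧
      (∀ x : Fin r → ℝ, (∀ i, x i ∈ Set.Icc (0 : ℝ) 1) →
        |(∑ j, f.eval absAct ((2 * m + 5) * Nat.clog 2 r + 1) (Fin.cons 1 x ∘ Fin.cast h0) j)
            - ∏ i, x i|
          ≤ (r : ℝ) ^ 2 * ((4 : ℝ) ^ m)⁻¹) ∧
      (∀ (j : Fin (p ((2 * m + 5) * Nat.clog 2 r + 1 + 1))) (k : Fin (p 0)),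
        |f.absProd ((2 * m + 5) * Nat.clog 2 r + 1) j k| ≤ 144 * (r : ℝ) ^ 4) := by
  have hm1 : 1 ≤ m := hm
  have hLLd : LLd r m = (2 * m + 5) * Nat.clog 2 r + 1 := rfl
  have hpL1 : pd r m ((2 * m + 5) * Nat.clog 2 r + 1 + 1) = 1 :=
    pd_big _ (by omega)
  have hQpow : ((2:ℝ))^(qr r) = ((Qr r : ℕ) : ℝ) := by
    unfold Qr
    rw [Nat.cast_pow]
    norm_num
  have hQle : ((Qr r : ℕ) : ℝ) ≤ 2*(r:ℝ) - 2 := by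
    have h1 : ((Qr r : ℕ) : ℝ) ≤ ((2*r - 2 : ℕ) : ℝ) := Nat.cast_le.mpr (Qr_le hr)
    have h2 : ((2*r - 2 : ℕ) : ℝ) = 2*(r:ℝ) - 2 := by
      push_cast [Nat.cast_sub (by omega : 2 ≤ 2*r)]
      ring
    linarith [h1, le_of_eq h2]
  have hrr : (2:ℝ) ≤ (r:ℝ) := by exact_mod_cast hr
  refine ⟨pd r m, rfl, hpL1, net r m, ?_, ?_, ?_⟩
  · -- widths
    intro i _
    have hQle' := Qr_le hr
    unfold pd
    split_ifs
    · nlinarith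
    · show NWd r ≤ 6*r*(m+2)+1
      have hNW : NWd r = 4*Qr r + 1 := rfl
      have h8 : NWd r ≤ 8*r := by omega
      have h18 : 18*r ≤ 6*r*(m+2) := by nlinarith
      omega
    · nlinarith
  · -- approximation
    intro x hx
    have hv := input_desc (m := m) rfl x
    have hro := readout hr hm1 x hx _ hv ((2 * m + 5) * Nat.clog 2 r + 1) rfl
    have hro' : ∀ jj : Fin (pd r m ((2 * m + 5) * Nat.clog 2 r + 1 + 1)),
        (net r m).eval absAct ((2 * m + 5) * Nat.clog 2 r + 1)
          (Fin.cons 1 x ∘ Fin.cast rfl) jj = Aseq m (Xf r x) (qr r) 0 := hro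
    have hsum : (∑ j, (net r m).eval absAct ((2 * m + 5) * Nat.clog 2 r + 1)
          (Fin.cons 1 x ∘ Fin.cast rfl) j) = Aseq m (Xf r x) (qr r) 0 := by
      rw [Finset.sum_congr rfl (fun jj _ => hro' jj), Finset.sum_const, Finset.card_univ,
        Fintype.card_fin, hpL1, one_smul]
    rw [hsum]
    have happ := approx_err (m := m) (Xf_mem hx) (qr r) 0
    have hprod : (∏ j ∈ Finset.range (2^(qr r)), Xf r x (2^(qr r)*0 + j)) = ∏ i, x i := by
      rw [Finset.prod_congr rfl (fun j _ => by rw [show 2^(qr r)*0 + j = j from by omega])]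
      exact prod_eq hr x
    rw [hprod] at happ
    have hpos : (0:ℝ) ≤ ((4:ℝ)^m)⁻¹ := by positivity
    refine le_trans happ ?_
    rw [hQpow]
    nlinarith [mul_nonneg hpos (show (0:ℝ) ≤ (r:ℝ)^2 - (r:ℝ) from by nlinarith),
      mul_nonneg hpos (show (0:ℝ) ≤ 2*(r:ℝ) - 1 - ((Qr r : ℕ):ℝ) from by linarith)]
  · -- absProd bound
    intro j k
    have h := bnd_final hr hm1 ((2 * m + 5) * Nat.clog 2 r + 1) rfl j k
    rw [abs_of_nonneg (absProd_nonneg r m _ j k)]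
    refine le_trans h ?_
    have h16 : (16:ℝ)^(qr r) = ((2:ℝ)^(qr r))^4 := by
      rw [show (16:ℝ) = 2^4 from by norm_num, ← pow_mul, ← pow_mul, Nat.mul_comm]
    rw [h16, hQpow]
    have hQnn : (0:ℝ) ≤ ((Qr r : ℕ):ℝ) := Nat.cast_nonneg _
    have hstep : ((Qr r : ℕ):ℝ)^4 ≤ (2*(r:ℝ))^4 := by
      apply pow_le_pow_left₀ hQnn
      linarith
    refine le_trans hstep ?_
    nlinarith [sq_nonneg (r:ℝ), pow_pos (show (0:ℝ) < r from by linarith) 4]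


/-- Lemma 5 (Multʳ): for every `r ≥ 2` and `m ≥ 1` there is a network `Mult^r_m` with the
absolute value activation, of depth `L = (2m+5)⌈log₂ r⌉ + 1`, input dimension `r+1`,
output dimension `1` and maximal width at most `6r(m+2)+1`, computing `∏ᵢ xᵢ` on `[0,1]^r`
up to error `r²·4^{-m}` from the input `(1, x₁, …, x_r)`, and such that the row vector `J`
obtained as the product of the entrywise absolute values of its weight matrices satisfies
`‖J‖_∞ ≤ 144 r⁴`. -/
theorem exists_multr_network (r m : ℕ) (hr : 2 ≤ r) (hm : 0 < m) :
    ∃ (p : ℕ → ℕ) (h0 : p 0 = r + 1) (_ : p ((2 * m + 5) * Nat.clog 2 r + 1 + 1) = 1)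
      (f : NN p),
      (∀ i ≤ (2 * m + 5) * Nat.clog 2 r + 1 + 1, p i ≤ 6 * r * (m + 2) + 1) ∧
      (∀ x : Fin r → ℝ, (∀ i, x i ∈ Set.Icc (0 : ℝ) 1) →
        |(∑ j, f.eval absAct ((2 * m + 5) * Nat.clog 2 r + 1) (Fin.cons 1 x ∘ Fin.cast h0) j)
            - ∏ i, x i|
          ≤ (r : ℝ) ^ 2 * ((4 : ℝ) ^ m)⁻¹) ∧
      (∀ (j : Fin (p ((2 * m + 5) * Nat.clog 2 r + 1 + 1))) (k : Fin (p 0)),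
        |f.absProd ((2 * m + 5) * Nat.clog 2 r + 1) j k| ≤ 144 * (r : ℝ) ^ 4) := by
  exact exists_multr_network' r m hr hm
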